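/- arXiv:2103.02681 — 13 statements merged into one kernel-verified Lean document; each statement's English description precedes it below -/
import Mathlib

section
/- Let ε > 0 and λ > 0 with √λ ≤ ε. Then for every z ∈ [0, λ/ε], the function q_{λ,z}(x) = (1/(2λ))(x − z)² + log(1 + |x|/ε) is increasing on [0, ∞); and for every z ∈ [λ/ε, ∞), q_{λ,z} is decreasing on [0, r₂(z)] and increasing on [r₂(z), ∞). -/
open Real Filter

/-- The scalar log-sum penalty `g(w) = log(1 + |w|/ε)`. -/
noncomputable def logpen (ε : ℝ) (w : ℝ) : ℝ := Real.log (1 + |w| / ε)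

/-- The objective `q_{λ,z}(x) = (1/(2λ))(x − z)² + g(x)`. -/
noncomputable def qfun (lam ε z x : ℝ) : ℝ :=
  1 / (2 * lam) * (x - z) ^ 2 + logpen ε x

/-- The proximity operator of `λ g` at `z`: the set of global minimizers of `q_{λ,z}`. -/
def prox (lam ε z : ℝ) : Set ℝ := {x | ∀ y : ℝ, qfun lam ε z x ≤ qfun lam ε z y}

/-- `r₁(z) = (z − ε)/2 − √((z + ε)²/4 − λ)`. -/
noncomputable def r1 (lam ε z : ℝ) : ℝ :=
  (z - ε) / 2 - Real.sqrt ((z + ε) ^ 2 / 4 - lam)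

/-- `r₂(z) = (z − ε)/2 + √((z + ε)²/4 − λ)`. -/
noncomputable def r2 (lam ε z : ℝ) : ℝ :=
  (z - ε) / 2 + Real.sqrt ((z + ε) ^ 2 / 4 - lam)

/-- `r(z) = q_{λ,z}(r₂(z)) − q_{λ,z}(0)`. -/
noncomputable def rfun (lam ε z : ℝ) : ℝ :=
  qfun lam ε z (r2 lam ε z) - qfun lam ε z 0

/-- The iteratively reweighted ℓ₁ iteration for `prox_{λ g}(z)`. -/
def IterRW (lam ε z : ℝ) (x : ℕ → ℝ) : Prop :=
  ∀ k : ℕ, x (k + 1) =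
    if |z| ≤ lam / (ε + |x k|) then 0
    else Real.sign z * (|z| - lam / (ε + |x k|))

lemma logpen_cont (ε : ℝ) (hε : 0 < ε) : Continuous (logpen ε) := by
  apply continuous_iff_continuousAt.2
  intro x
  have h1 : (0:ℝ) < 1 + |x| / ε := by positivity
  exact ContinuousAt.comp (Real.continuousAt_log h1.ne') (by fun_prop : ContinuousAt (fun w : ℝ => 1 + |w|/ε) x)

lemma qfun_cont (lam ε z : ℝ) (hε : 0 < ε) : Continuous (qfun lam ε z) := by
  unfold qfun
  exact (by fun_prop : Continuous fun x : ℝ => 1/(2*lam)*(x-z)^2).add (logpen_cont ε hε)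

lemma qfun_hasDerivAt (lam ε z x : ℝ) (hε : 0 < ε) (hlam : 0 < lam) (hx : 0 < x) :
    HasDerivAt (qfun lam ε z) ((x - z)/lam + 1/(ε + x)) x := by
  have h1 : HasDerivAt (fun y : ℝ => 1/(2*lam) * (y - z)^2) ((x - z)/lam) x := by
    have := (((hasDerivAt_id x).sub_const z).pow 2).const_mul (1/(2*lam))
    refine this.congr_deriv ?_
    simp only [id]; field_simp; ring
  have hpos : (0:ℝ) < 1 + x / ε := by positivity
  have h2 : HasDerivAt (fun y : ℝ => Real.log (1 + y/ε)) (1/(ε + x)) x := by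
    have := (((hasDerivAt_id x).div_const ε).const_add 1).log hpos.ne'
    refine this.congr_deriv ?_
    simp only [id]; field_simp
  have hsum := h1.add h2
  apply hsum.congr_of_eventuallyEq
  have : ∀ᶠ y in nhds x, 0 < y := eventually_gt_nhds hx
  filter_upwards [this] with y hy
  unfold qfun logpen
  rw [abs_of_pos hy]
  rfl

lemma qfun_deriv (lam ε z x : ℝ) (hε : 0 < ε) (hlam : 0 < lam) (hx : 0 < x) :
    deriv (qfun lam ε z) x = (x - z)/lam + 1/(ε + x) :=
  (qfun_hasDerivAt lam ε z x hε hlam hx).deriv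


/-- monotonicity of `q_{λ,z}` when `√λ ≤ ε`. -/
theorem qfun_monotonicity_sqrt_le (ε lam : ℝ) (hε : 0 < ε) (hlam : 0 < lam)
    (h : Real.sqrt lam ≤ ε) :
    (∀ z ∈ Set.Icc (0 : ℝ) (lam / ε), StrictMonoOn (qfun lam ε z) (Set.Ici 0)) ∧
    (∀ z ∈ Set.Ici (lam / ε),
      StrictAntiOn (qfun lam ε z) (Set.Icc 0 (r2 lam ε z)) ∧
      StrictMonoOn (qfun lam ε z) (Set.Ici (r2 lam ε z))) := by
  have hlamε : lam ≤ ε ^ 2 := by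
    nlinarith [Real.sq_sqrt hlam.le, Real.sqrt_nonneg lam]
  constructor
  · intro z hz
    obtain ⟨hz0, hzle⟩ := hz
    have hzε : z ≤ ε := by
      calc z ≤ lam / ε := hzle
        _ ≤ ε := by rw [div_le_iff₀ hε]; nlinarith
    apply strictMonoOn_of_deriv_pos (convex_Ici 0) ((qfun_cont lam ε z hε).continuousOn)
    intro x hx
    rw [interior_Ici, Set.mem_Ioi] at hx
    rw [qfun_deriv lam ε z x hε hlam hx]
    have hεz : lam - ε * z ≥ 0 := by
      rw [ge_iff_le, sub_nonneg]
      calc ε * z ≤ ε * (lam / ε) := by nlinarith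
        _ = lam := by field_simp
    have hεx : 0 < ε + x := by linarith
    have key : 0 < (x - z) * (ε + x) + lam := by nlinarith
    have : (x - z)/lam + 1/(ε + x) = ((x - z) * (ε + x) + lam) / (lam * (ε + x)) := by
      field_simp; try ring
    rw [this]
    positivity
  · intro z hz
    rw [Set.mem_Ici] at hz
    have hz0 : 0 < z := lt_of_lt_of_le (by positivity) hz
    have hεz : lam ≤ ε * z := by
      rw [div_le_iff₀ hε] at hz; linarith [mul_comm z ε]
    have hD : (0:ℝ) ≤ (z + ε) ^ 2 / 4 - lam := by nlinarith
    set s := Real.sqrt ((z + ε) ^ 2 / 4 - lam) with hs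
    have hs0 : 0 ≤ s := Real.sqrt_nonneg _
    have hs2 : s ^ 2 = (z + ε) ^ 2 / 4 - lam := Real.sq_sqrt hD
    have hr2 : r2 lam ε z = (z - ε) / 2 + s := rfl
    have hr1le : (z - ε) / 2 ≤ s := by nlinarith
    have hr2nn : 0 ≤ r2 lam ε z := by rw [hr2]; nlinarith
    -- key factorization: (x - z)(ε + x) + lam = (x - r1)(x - r2)
    constructor
    · apply strictAntiOn_of_deriv_neg (convex_Icc 0 _) ((qfun_cont lam ε z hε).continuousOn)
      intro x hx
      rw [interior_Icc] at hx
      obtain ⟨hx0, hxr⟩ := hx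
      rw [qfun_deriv lam ε z x hε hlam hx0]
      have hεx : 0 < ε + x := by linarith
      have key : (x - z) * (ε + x) + lam < 0 := by
        have h1 : x - ((z - ε) / 2 - s) > 0 := by linarith
        have h2 : x - ((z - ε) / 2 + s) < 0 := by rw [hr2] at hxr; linarith
        nlinarith
      have : (x - z)/lam + 1/(ε + x) = ((x - z) * (ε + x) + lam) / (lam * (ε + x)) := by
        field_simp; try ring
      rw [this]
      exact div_neg_of_neg_of_pos key (by positivity)
    · apply strictMonoOn_of_deriv_pos (convex_Ici _) ((qfun_cont lam ε z hε).continuousOn)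
      intro x hx
      rw [interior_Ici, Set.mem_Ioi] at hx
      have hx0 : 0 < x := lt_of_le_of_lt hr2nn hx
      rw [qfun_deriv lam ε z x hε hlam hx0]
      have hεx : 0 < ε + x := by linarith
      have key : 0 < (x - z) * (ε + x) + lam := by
        have h1 : x - ((z - ε) / 2 - s) > 0 := by linarith
        have h2 : x - ((z - ε) / 2 + s) > 0 := by rw [hr2] at hx; linarith
        nlinarith
      have : (x - z)/lam + 1/(ε + x) = ((x - z) * (ε + x) + lam) / (lam * (ε + x)) := by
        field_simp; try ring
      rw [this]
      positivity
end

section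
/- Let ε > 0, λ > 0, and z ∈ ℝ. If √λ ≤ ε, then the function q_{λ,z}(x) = (1/(2λ))(x − z)² + log(1 + |x|/ε) is convex on [0, ∞). If √λ > ε, then q_{λ,z} is concave on [0, √λ − ε] and convex on [√λ − ε, ∞). -/
open Real Filter

noncomputable def Ffun (lam ε z x : ℝ) : ℝ :=
  1 / (2 * lam) * (x - z) ^ 2 + (Real.log (ε + x) - Real.log ε)

lemma convexOn_congr {s : Set ℝ} {f g : ℝ → ℝ} (h : ConvexOn ℝ s f)
    (he : Set.EqOn f g s) : ConvexOn ℝ s g :=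
  ⟨h.1, fun x hx y hy a b ha hb hab => by
    rw [← he hx, ← he hy, ← he (h.1 hx hy ha hb hab)]
    exact h.2 hx hy ha hb hab⟩

lemma concaveOn_congr {s : Set ℝ} {f g : ℝ → ℝ} (h : ConcaveOn ℝ s f)
    (he : Set.EqOn f g s) : ConcaveOn ℝ s g :=
  ⟨h.1, fun x hx y hy a b ha hb hab => by
    rw [← he hx, ← he hy, ← he (h.1 hx hy ha hb hab)]
    exact h.2 hx hy ha hb hab⟩

lemma Ffun_eq (lam ε z : ℝ) (hε : 0 < ε) {x : ℝ} (hx : 0 ≤ x) :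
    Ffun lam ε z x = qfun lam ε z x := by
  have h1 : (0:ℝ) < ε + x := by linarith
  unfold Ffun qfun logpen
  rw [abs_of_nonneg hx]
  congr 1
  rw [← Real.log_div h1.ne' hε.ne']
  congr 1
  field_simp

lemma hF1 (lam ε z : ℝ) (hlam : 0 < lam) {x : ℝ} (hx : 0 < ε + x) :
    HasDerivAt (Ffun lam ε z) ((x - z) / lam + 1 / (ε + x)) x := by
  have h1 : HasDerivAt (fun x : ℝ => 1 / (2 * lam) * (x - z) ^ 2)
      ((x - z) / lam) x := by
    have := (((hasDerivAt_id x).sub_const z).pow 2).const_mul (1 / (2 * lam))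
    simp only [Pi.pow_apply, id] at this
    refine this.congr_deriv ?_
    field_simp
    ring
  have h2 : HasDerivAt (fun x : ℝ => Real.log (ε + x) - Real.log ε)
      (1 / (ε + x)) x := by
    have h3 : HasDerivAt (fun x : ℝ => ε + x) 1 x := (hasDerivAt_id x).const_add ε
    have := (h3.log hx.ne').sub_const (Real.log ε)
    simpa using this
  exact h1.add h2

lemma hF2 (lam ε z : ℝ) (hlam : 0 < lam) {x : ℝ} (hx : 0 < ε + x) :
    HasDerivAt (fun x => (x - z) / lam + 1 / (ε + x))
      (1 / lam - 1 / (ε + x) ^ 2) x := by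
  have h1 : HasDerivAt (fun x : ℝ => (x - z) / lam) (1 / lam) x := by
    simpa using ((hasDerivAt_id x).sub_const z).div_const lam
  have h3 : HasDerivAt (fun x : ℝ => ε + x) 1 x := (hasDerivAt_id x).const_add ε
  have h2 : HasDerivAt (fun x : ℝ => 1 / (ε + x)) (-(1 / (ε + x) ^ 2)) x := by
    have := h3.inv hx.ne'
    simpa [one_div, neg_div, Pi.inv_def] using this
  have := h1.add h2
  simpa [sub_eq_add_neg, Pi.add_def] using this


/-- convexity/concavity of `q_{λ,z}` on `[0, ∞)`. -/
theorem qfun_convexity (ε lam z : ℝ) (hε : 0 < ε) (hlam : 0 < lam) :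
    (Real.sqrt lam ≤ ε → ConvexOn ℝ (Set.Ici (0 : ℝ)) (qfun lam ε z)) ∧
    (ε < Real.sqrt lam →
      ConcaveOn ℝ (Set.Icc (0 : ℝ) (Real.sqrt lam - ε)) (qfun lam ε z) ∧
      ConvexOn ℝ (Set.Ici (Real.sqrt lam - ε)) (qfun lam ε z)) := by
  have hsq : Real.sqrt lam ^ 2 = lam := Real.sq_sqrt hlam.le
  have hsqpos : 0 < Real.sqrt lam := Real.sqrt_pos.mpr hlam
  have hcont : ∀ s : Set ℝ, s ⊆ Set.Ici 0 → ContinuousOn (Ffun lam ε z) s := by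
    intro s hs
    apply ContinuousOn.add
    · exact (continuous_const.mul ((continuous_id.sub continuous_const).pow 2)).continuousOn
    · apply ContinuousOn.sub _ continuousOn_const
      apply Real.continuousOn_log.comp
        (continuousOn_const.add continuousOn_id)
      intro x hx
      have : (0:ℝ) ≤ x := hs hx
      simp only [Set.mem_compl_iff, Set.mem_singleton_iff]
      intro h; simp at h; linarith
  -- key: convexity of Ffun via second derivative on sets
  have key : ∀ s : Set ℝ, Convex ℝ s → s ⊆ Set.Ici 0 →
      (∀ x ∈ interior s, 0 ≤ 1 / lam - 1 / (ε + x) ^ 2) →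
      ConvexOn ℝ s (Ffun lam ε z) := by
    intro s hconv hs h2
    apply convexOn_of_hasDerivWithinAt2_nonneg hconv (hcont s hs)
      (f' := fun x => (x - z) / lam + 1 / (ε + x))
      (f'' := fun x => 1 / lam - 1 / (ε + x) ^ 2)
    · intro x hx
      have hx0 : (0:ℝ) ≤ x := hs (interior_subset hx)
      exact (hF1 lam ε z hlam (by linarith)).hasDerivWithinAt
    · intro x hx
      have hx0 : (0:ℝ) ≤ x := hs (interior_subset hx)
      exact (hF2 lam ε z hlam (by linarith)).hasDerivWithinAt
    · exact h2
  have keyc : ∀ s : Set ℝ, Convex ℝ s → s ⊆ Set.Ici 0 →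
      (∀ x ∈ interior s, 1 / lam - 1 / (ε + x) ^ 2 ≤ 0) →
      ConcaveOn ℝ s (Ffun lam ε z) := by
    intro s hconv hs h2
    apply concaveOn_of_hasDerivWithinAt2_nonpos hconv (hcont s hs)
      (f' := fun x => (x - z) / lam + 1 / (ε + x))
      (f'' := fun x => 1 / lam - 1 / (ε + x) ^ 2)
    · intro x hx
      have hx0 : (0:ℝ) ≤ x := hs (interior_subset hx)
      exact (hF1 lam ε z hlam (by linarith)).hasDerivWithinAt
    · intro x hx
      have hx0 : (0:ℝ) ≤ x := hs (interior_subset hx)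
      exact (hF2 lam ε z hlam (by linarith)).hasDerivWithinAt
    · exact h2
  -- nonneg of second derivative when ε + x ≥ √λ
  have pos2 : ∀ x : ℝ, Real.sqrt lam ≤ ε + x → 0 ≤ 1 / lam - 1 / (ε + x) ^ 2 := by
    intro x hx
    have h1 : lam ≤ (ε + x) ^ 2 := by
      calc lam = Real.sqrt lam ^ 2 := hsq.symm
      _ ≤ (ε + x) ^ 2 := by nlinarith
    have h2 : (0:ℝ) < (ε + x) ^ 2 := by nlinarith
    have := one_div_le_one_div_of_le hlam h1
    linarith
  have neg2 : ∀ x : ℝ, 0 < ε + x → ε + x ≤ Real.sqrt lam →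
      1 / lam - 1 / (ε + x) ^ 2 ≤ 0 := by
    intro x hx0 hx
    have h1 : (ε + x) ^ 2 ≤ lam := by nlinarith
    have := one_div_le_one_div_of_le (by nlinarith) h1
    linarith
  constructor
  · intro hle
    refine convexOn_congr (key _ (convex_Ici 0) le_rfl ?_)
      (fun x hx => Ffun_eq lam ε z hε hx)
    intro x hx
    rw [interior_Ici] at hx
    exact pos2 x (by simp at hx; linarith)
  · intro hgt
    constructor
    · refine concaveOn_congr (keyc _ (convex_Icc _ _) ?_ ?_)
        (fun x hx => Ffun_eq lam ε z hε hx.1)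
      · exact fun x hx => hx.1
      · intro x hx
        rw [interior_Icc] at hx
        exact neg2 x (by linarith [hx.1]) (by linarith [hx.2])
    · have hsub : Set.Ici (Real.sqrt lam - ε) ⊆ Set.Ici (0:ℝ) := by
        intro x hx; simp only [Set.mem_Ici] at *; linarith
      refine convexOn_congr (key _ (convex_Ici _) hsub ?_)
        (fun x hx => Ffun_eq lam ε z hε (hsub hx))
      intro x hx
      rw [interior_Ici] at hx
      exact pos2 x (by simp at hx; linarith)
end

section
/- Let ε > 0 and λ > 0. Let 0 ≤ u < v be real numbers. If α ∈ prox_{λg}(u) and β ∈ prox_{λg}(v), then 0 ≤ α ≤ β. -/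
open Real Filter

/-- monotonicity of the proximity operator. -/
theorem prox_monotone (ε lam u v α β : ℝ) (hε : 0 < ε) (hlam : 0 < lam)
    (hu : 0 ≤ u) (huv : u < v)
    (hα : α ∈ prox lam ε u) (hβ : β ∈ prox lam ε v) :
    0 ≤ α ∧ α ≤ β := by
  have hlpos : (0:ℝ) < 1 / (2 * lam) := by positivity
  constructor
  · by_contra hneg
    push_neg at hneg
    have h1 := hα (-α)
    simp only [qfun, logpen, abs_neg] at h1
    have hquad : (α - u)^2 ≤ (-α - u)^2 := by nlinarith
    have hu0 : u = 0 := by nlinarith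
    have h0 := hα 0
    simp only [qfun, logpen, abs_zero, zero_div, add_zero, Real.log_one, hu0, sub_zero] at h0
    have hlog : 0 ≤ Real.log (1 + |α| / ε) := by
      apply Real.log_nonneg
      have : 0 ≤ |α| / ε := by positivity
      linarith
    nlinarith [mul_pos hlpos (mul_pos (neg_pos.mpr hneg) (neg_pos.mpr hneg))]
  · have h1 := hα β
    have h2 := hβ α
    simp only [qfun] at h1 h2
    nlinarith [mul_pos hlpos (sub_pos.mpr huv)]
end

section
/- Let ε > 0 and λ > 0 with √λ ≤ ε. Then for every z ∈ ℝ: prox_{λg}(z) = {0} if |z| ≤ λ/ε, and prox_{λg}(z) = {sgn(z)·r₂(|z|)} if |z| > λ/ε, where r₂(w) = (w − ε)/2 + √((w + ε)²/4 − λ). -/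
open Real Filter

lemma aux_log_lb {v : ℝ} (hv : 1 < v) : 2*(v-1)/(v+1) < Real.log v := by
  have hmono : StrictMonoOn (fun t : ℝ => Real.log t - 2*(t-1)/(t+1)) (Set.Ici (1:ℝ)) := by
    have hderiv : ∀ t ∈ Set.Ioi (1:ℝ),
        HasDerivAt (fun t : ℝ => Real.log t - 2*(t-1)/(t+1)) ((t-1)^2/(t*(t+1)^2)) t := by
      intro t ht
      simp only [Set.mem_Ioi] at ht
      have ht0 : (0:ℝ) < t := lt_trans one_pos ht
      have h1 : HasDerivAt (fun t : ℝ => 2*(t-1)) 2 t := by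
        simpa using ((hasDerivAt_id t).sub_const 1).const_mul 2
      have h2 : HasDerivAt (fun t : ℝ => t+1) 1 t := (hasDerivAt_id t).add_const 1
      have h3 := h1.div h2 (by linarith)
      have h4 := (Real.hasDerivAt_log (ne_of_gt ht0)).sub h3
      refine h4.congr_deriv ?_
      have hne : t + 1 ≠ 0 := by linarith
      field_simp
      ring
    apply strictMonoOn_of_deriv_pos (convex_Ici 1)
    · apply ContinuousOn.sub
      · apply Real.continuousOn_log.mono
        intro x hx
        simp only [Set.mem_Ici] at hx
        simp only [Set.mem_compl_iff, Set.mem_singleton_iff]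
        intro hc; rw [hc] at hx; linarith
      · apply ContinuousOn.div
        · fun_prop
        · fun_prop
        · intro x hx
          simp only [Set.mem_Ici] at hx
          intro hc; linarith
    · intro t ht
      rw [interior_Ici] at ht
      rw [(hderiv t ht).deriv]
      simp only [Set.mem_Ioi] at ht
      have h1 : (0:ℝ) < (t-1)^2 := pow_pos (by linarith) 2
      have h2 : (0:ℝ) < t*(t+1)^2 := by positivity
      exact div_pos h1 h2
  have := hmono (Set.self_mem_Ici) (show v ∈ Set.Ici (1:ℝ) from hv.le) hv
  simp only [Real.log_one] at this
  linarith

lemma aux_log_ub {v : ℝ} (hv : 1 < v) : Real.log v < (v - 1/v)/2 := by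
  have hmono : StrictMonoOn (fun t : ℝ => (t - 1/t)/2 - Real.log t) (Set.Ici (1:ℝ)) := by
    have hderiv : ∀ t ∈ Set.Ioi (1:ℝ),
        HasDerivAt (fun t : ℝ => (t - 1/t)/2 - Real.log t) ((t-1)^2/(2*t^2)) t := by
      intro t ht
      simp only [Set.mem_Ioi] at ht
      have ht0 : (0:ℝ) < t := lt_trans one_pos ht
      have h1 : HasDerivAt (fun t : ℝ => t - 1/t) (1 - (-1/t^2)) t := by
        have := (hasDerivAt_id t).sub ((hasDerivAt_inv (ne_of_gt ht0)))
        norm_num at this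
        rw [show (fun t : ℝ => t - 1/t) = id - fun y => y⁻¹ by ext; simp [one_div]]
        refine this.congr_deriv ?_
        ring
      have h2 := (h1.div_const 2).sub (Real.hasDerivAt_log (ne_of_gt ht0))
      refine h2.congr_deriv ?_
      field_simp
      ring
    apply strictMonoOn_of_deriv_pos (convex_Ici 1)
    · apply ContinuousOn.sub
      · apply ContinuousOn.div_const
        apply ContinuousOn.sub continuousOn_id
        apply ContinuousOn.div continuousOn_const continuousOn_id
        intro x hx
        simp only [Set.mem_Ici] at hx
        simp only [id]
        intro hc; rw [hc] at hx; linarith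
      · apply Real.continuousOn_log.mono
        intro x hx
        simp only [Set.mem_Ici] at hx
        simp only [Set.mem_compl_iff, Set.mem_singleton_iff]
        intro hc; rw [hc] at hx; linarith
    · intro t ht
      rw [interior_Ici] at ht
      rw [(hderiv t ht).deriv]
      simp only [Set.mem_Ioi] at ht
      have h1 : (0:ℝ) < (t-1)^2 := pow_pos (by linarith) 2
      have h2 : (0:ℝ) < 2*t^2 := by positivity
      exact div_pos h1 h2
  have := hmono (Set.self_mem_Ici) (show v ∈ Set.Ici (1:ℝ) from hv.le) hv
  simp only [Real.log_one] at this
  norm_num at this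
  simp only [one_div] at this ⊢
  linarith

lemma aux_log_lb2 {a b : ℝ} (hb : 0 < b) (hab : b < a) :
    2*(a-b)/(a+b) < Real.log a - Real.log b := by
  have hv : 1 < a/b := (one_lt_div hb).2 hab
  have h0 := aux_log_lb hv
  have h1 : b ≠ 0 := ne_of_gt hb
  have h2 : a + b ≠ 0 := ne_of_gt (by linarith)
  have e1 : 2*(a/b-1)/(a/b+1) = 2*(a-b)/(a+b) := by field_simp
  have e2 : Real.log (a/b) = Real.log a - Real.log b :=
    Real.log_div (ne_of_gt (lt_trans hb hab)) h1
  rw [e1, e2] at h0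
  exact h0

lemma aux_log_ub2 {a b : ℝ} (hb : 0 < b) (hab : b < a) :
    Real.log a - Real.log b < (a^2-b^2)/(2*a*b) := by
  have hv : 1 < a/b := (one_lt_div hb).2 hab
  have h0 := aux_log_ub hv
  have h1 : b ≠ 0 := ne_of_gt hb
  have h2 : a ≠ 0 := ne_of_gt (lt_trans hb hab)
  have e1 : (a/b - 1/(a/b))/2 = (a^2-b^2)/(2*a*b) := by field_simp
  have e2 : Real.log (a/b) = Real.log a - Real.log b := Real.log_div h2 h1
  rw [e1, e2] at h0
  exact h0

lemma qfun_neg (lam ε z x : ℝ) : qfun lam ε z x = qfun lam ε (-z) (-x) := by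
  unfold qfun logpen
  rw [abs_neg]
  ring_nf

lemma prox_eq_singleton {lam ε z m : ℝ}
    (h : ∀ y : ℝ, y ≠ m → qfun lam ε z m < qfun lam ε z y) : prox lam ε z = {m} := by
  ext x
  simp only [prox, Set.mem_setOf_eq, Set.mem_singleton_iff]
  constructor
  · intro hx
    by_contra hne
    exact absurd (hx m) (not_le.2 (h x hne))
  · intro hxm
    rw [hxm]
    intro y
    by_cases hy : y = m
    · rw [hy]
    · exact (h y hy).le

lemma caseA {ε lam z : ℝ} (hε : 0 < ε) (hlam : 0 < lam) (hz0 : 0 ≤ z)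
    (hz : z * ε ≤ lam) (hzε : z ≤ ε) :
    ∀ y : ℝ, y ≠ 0 → qfun lam ε z 0 < qfun lam ε z y := by
  have hpos : ∀ y : ℝ, 0 < y → qfun lam ε z 0 < qfun lam ε z y := by
    intro y hy
    have hlog := aux_log_lb2 hε (show ε < ε + y by linarith)
    have e2 : 2*((ε+y)-ε)/((ε+y)+ε) = 2*y/(y+2*ε) := by ring_nf
    have e1 : Real.log (ε+y) - Real.log ε = logpen ε y := by
      unfold logpen
      rw [abs_of_pos hy, ← Real.log_div (by positivity) (ne_of_gt hε)]
      congr 1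
      field_simp
    rw [e1, e2] at hlog
    have hP : 0 ≤ ((y-z)^2 - (0-z)^2) * (y+2*ε) + 4*lam*y := by
      nlinarith [mul_pos (mul_pos hy hy) hy, mul_nonneg (mul_nonneg hy.le hy.le) (sub_nonneg.2 hzε),
        mul_nonneg hy.le (sub_nonneg.2 hz)]
    have hfrac : 0 ≤ 1/(2*lam)*((y-z)^2 - (0-z)^2) + 2*y/(y+2*ε) := by
      have heq : 1/(2*lam)*((y-z)^2 - (0-z)^2) + 2*y/(y+2*ε)
          = (((y-z)^2 - (0-z)^2) * (y+2*ε) + 4*lam*y)/(2*lam*(y+2*ε)) := by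
        field_simp
        ring
      rw [heq]
      exact div_nonneg hP (by positivity)
    have hlogpen0 : logpen ε 0 = 0 := by simp [logpen]
    unfold qfun
    rw [hlogpen0]
    nlinarith [hlog, hfrac]
  intro y hy
  rcases lt_or_gt_of_ne hy with hneg | hposy
  · have h1 : qfun lam ε z (-y) ≤ qfun lam ε z y := by
      unfold qfun logpen
      rw [abs_neg]
      have hsq : ((-y) - z)^2 ≤ (y - z)^2 := by nlinarith [mul_nonneg (neg_nonneg.2 hneg.le) hz0]
      have := mul_le_mul_of_nonneg_left hsq (by positivity : (0:ℝ) ≤ 1/(2*lam))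
      linarith
    exact lt_of_lt_of_le (hpos (-y) (by linarith)) h1
  · exact hpos y hposy

lemma caseB {ε lam z : ℝ} (hε : 0 < ε) (hlam : 0 < lam)
    (hz : lam/ε < z) :
    ∀ y : ℝ, y ≠ r2 lam ε z → qfun lam ε z (r2 lam ε z) < qfun lam ε z y := by
  have hz0 : 0 < z := lt_trans (div_pos hlam hε) hz
  have hzε : lam < z*ε := by rw [div_lt_iff₀ hε] at hz; linarith
  have hD : 0 < (z+ε)^2/4 - lam := by nlinarith [sq_nonneg (z-ε)]
  set s := Real.sqrt ((z+ε)^2/4 - lam) with hs_def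
  have hs0 : 0 < s := Real.sqrt_pos.2 hD
  have hs2 : s^2 = (z+ε)^2/4 - lam := Real.sq_sqrt hD.le
  set m := r2 lam ε z with hm_def
  have hm : m = (z-ε)/2 + s := rfl
  have hlam_eq : lam = (z - m)*(ε + m) := by rw [hm]; nlinarith [hs2]
  have hm0 : 0 < m := by
    rw [hm]
    by_contra hc
    push_neg at hc
    have h1 : s ≤ (ε-z)/2 := by linarith
    have h2 : s*s ≤ ((ε-z)/2)*((ε-z)/2) := mul_le_mul h1 h1 hs0.le (by linarith)
    nlinarith [hs2]
  have hmz : z - ε ≤ m := by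
    by_contra hc
    push_neg at hc
    rw [hm] at hc
    have h1 : s < (z-ε)/2 := by linarith
    have h0 : (0:ℝ) ≤ (z-ε)/2 := le_trans hs0.le h1.le
    have h2 : s*s ≤ ((z-ε)/2)*((z-ε)/2) := mul_le_mul h1.le h1.le hs0.le h0
    nlinarith [hs2]
  have hεm : (0:ℝ) < ε + m := by linarith
  have hposP : ∀ y : ℝ, 0 ≤ y → y ≠ m → qfun lam ε z m < qfun lam ε z y := by
    intro y hy0 hy
    have hεy : (0:ℝ) < ε + y := by linarith
    have hq : qfun lam ε z y - qfun lam ε z m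
        = 1/(2*lam)*((y-z)^2 - (m-z)^2) + (Real.log (ε+y) - Real.log (ε+m)) := by
      unfold qfun logpen
      rw [abs_of_nonneg hy0, abs_of_pos hm0,
        show (1:ℝ) + y/ε = (ε+y)/ε by field_simp,
        show (1:ℝ) + m/ε = (ε+m)/ε by field_simp,
        Real.log_div (ne_of_gt hεy) (ne_of_gt hε),
        Real.log_div (ne_of_gt hεm) (ne_of_gt hε)]
      ring
    rcases lt_or_gt_of_ne hy with hlt | hgt
    · -- 0 ≤ y < m
      have hlog := aux_log_ub2 hεy (show ε + y < ε + m by linarith)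
      have e2 : ((ε+m)^2-(ε+y)^2)/(2*(ε+m)*(ε+y))
          = -(((ε+y)^2-(ε+m)^2)/(2*(ε+y)*(ε+m))) := by ring
      rw [e2] at hlog
      have hN : 0 ≤ ((y-z)^2 - (m-z)^2)*(ε+y)*(ε+m) + lam*((ε+y)^2-(ε+m)^2) := by
        have hid : ((y-z)^2 - (m-z)^2)*(ε+y)*(ε+m) + lam*((ε+y)^2-(ε+m)^2)
            = (y-m)^2*((ε+m)*(y+m+ε-z)) := by rw [hlam_eq]; ring
        rw [hid]
        exact mul_nonneg (sq_nonneg _) (mul_nonneg hεm.le (by linarith))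
      have hfrac : 0 ≤ 1/(2*lam)*((y-z)^2 - (m-z)^2) + ((ε+y)^2-(ε+m)^2)/(2*(ε+y)*(ε+m)) := by
        have heq : 1/(2*lam)*((y-z)^2 - (m-z)^2) + ((ε+y)^2-(ε+m)^2)/(2*(ε+y)*(ε+m))
            = (((y-z)^2 - (m-z)^2)*(ε+y)*(ε+m) + lam*((ε+y)^2-(ε+m)^2))/(2*lam*((ε+y)*(ε+m))) := by
          field_simp
        rw [heq]
        exact div_nonneg hN (by positivity)
      linarith [hq, hfrac, hlog]
    · -- y > m
      have hlog := aux_log_lb2 hεm (show ε + m < ε + y by linarith)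
      have e2 : 2*((ε+y)-(ε+m))/((ε+y)+(ε+m)) = 2*(y-m)/(y+m+2*ε) := by ring_nf
      rw [e2] at hlog
      have hP : 0 ≤ ((y-z)^2 - (m-z)^2)*(y+m+2*ε) + 4*lam*(y-m) := by
        have hid : ((y-z)^2 - (m-z)^2)*(y+m+2*ε) + 4*lam*(y-m)
            = (y-m)^2*(y+3*m+2*ε-2*z) := by rw [hlam_eq]; ring
        rw [hid]
        exact mul_nonneg (sq_nonneg _) (by linarith)
      have hfrac : 0 ≤ 1/(2*lam)*((y-z)^2 - (m-z)^2) + 2*(y-m)/(y+m+2*ε) := by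
        have hden : (0:ℝ) < y+m+2*ε := by linarith
        have heq : 1/(2*lam)*((y-z)^2 - (m-z)^2) + 2*(y-m)/(y+m+2*ε)
            = (((y-z)^2 - (m-z)^2)*(y+m+2*ε) + 4*lam*(y-m))/(2*lam*(y+m+2*ε)) := by
          field_simp
          ring
        rw [heq]
        exact div_nonneg hP (by positivity)
      linarith [hq, hfrac, hlog]
  intro y hy
  by_cases hy0 : 0 ≤ y
  · exact hposP y hy0 hy
  · push_neg at hy0
    have h1 : qfun lam ε z (-y) < qfun lam ε z y := by
      unfold qfun logpen
      rw [abs_neg]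
      have hsq : ((-y) - z)^2 < (y - z)^2 := by nlinarith [mul_pos (neg_pos.2 hy0) hz0]
      have := mul_lt_mul_of_pos_left hsq (by positivity : (0:ℝ) < 1/(2*lam))
      linarith
    by_cases hym : -y = m
    · rw [← hym]
      exact h1
    · exact lt_trans (hposP (-y) (by linarith) hym) h1

/-- explicit form of `prox_{λg}` when `√λ ≤ ε`. -/
theorem prox_formula_sqrt_le (ε lam : ℝ) (hε : 0 < ε) (hlam : 0 < lam)
    (h : Real.sqrt lam ≤ ε) (z : ℝ) :
    (|z| ≤ lam / ε → prox lam ε z = {0}) ∧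
    (lam / ε < |z| → prox lam ε z = {Real.sign z * r2 lam ε |z|}) := by
  have hsl : Real.sqrt lam * Real.sqrt lam = lam := Real.mul_self_sqrt hlam.le
  have hε2 : lam ≤ ε^2 := by nlinarith [Real.sqrt_nonneg lam]
  constructor
  · intro h1
    apply prox_eq_singleton
    intro y hy
    rcases le_or_gt 0 z with hz0 | hz0
    · rw [abs_of_nonneg hz0] at h1
      have hze : z * ε ≤ lam := by rw [le_div_iff₀ hε] at h1; linarith
      have hzε : z ≤ ε := by rw [le_div_iff₀ hε] at h1; nlinarith
      exact caseA hε hlam hz0 hze hzε y hy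
    · rw [abs_of_neg hz0] at h1
      have hze : (-z) * ε ≤ lam := by rw [le_div_iff₀ hε] at h1; linarith
      have hzε : -z ≤ ε := by rw [le_div_iff₀ hε] at h1; nlinarith
      have hA := caseA hε hlam (by linarith : (0:ℝ) ≤ -z) hze hzε
      have e0 : qfun lam ε z 0 = qfun lam ε (-z) 0 := by
        rw [qfun_neg lam ε z 0, neg_zero]
      have ey : qfun lam ε z y = qfun lam ε (-z) (-y) := qfun_neg lam ε z y
      rw [e0, ey]
      exact hA (-y) (by simpa using hy)
  · intro h2
    rcases lt_trichotomy z 0 with hz0 | hz0 | hz0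
    · rw [abs_of_neg hz0, Real.sign_of_neg hz0]
      apply prox_eq_singleton
      intro y hy
      have hB := caseB hε hlam (by rwa [abs_of_neg hz0] at h2)
      have hy' : -y ≠ r2 lam ε (-z) := by
        intro hc
        apply hy
        rw [← hc]
        ring
      have e1 : qfun lam ε z (-1 * r2 lam ε (-z)) = qfun lam ε (-z) (r2 lam ε (-z)) := by
        rw [qfun_neg lam ε z (-1 * r2 lam ε (-z))]
        congr 1
        ring
      have e2 : qfun lam ε z y = qfun lam ε (-z) (-y) := qfun_neg lam ε z y
      rw [e1, e2]
      exact hB (-y) hy'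
    · exfalso
      rw [hz0] at h2
      simp only [abs_zero] at h2
      have : (0:ℝ) < lam/ε := div_pos hlam hε
      linarith
    · rw [abs_of_pos hz0, Real.sign_of_pos hz0, one_mul]
      exact prox_eq_singleton (caseB hε hlam (by rwa [abs_of_pos hz0] at h2))
end

section
/- Let ε > 0 and λ > 0 with √λ > ε. Define r(z) = q_{λ,z}(r₂(z)) − q_{λ,z}(0), where q_{λ,z}(x) = (1/(2λ))(x − z)² + log(1 + |x|/ε) and r₂(z) = (z − ε)/2 + √((z + ε)²/4 − λ). Then r(2√λ − ε) > 0, r(λ/ε) < 0, and r has exactly one root z* in the open interval (2√λ − ε, λ/ε). -/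
open Real Filter

section Aux

open Set

lemma hasDerivAt_poly (a b c x : ℝ) :
    HasDerivAt (fun y => a + b*y + c*y^2) (b + 2*c*x) x := by
  have h1 : HasDerivAt (fun y : ℝ => y) 1 x := hasDerivAt_id x
  have h2 : HasDerivAt (fun y : ℝ => y^2) (2*x) x := by
    simpa using hasDerivAt_pow 2 x
  have := ((hasDerivAt_const x a).add (h1.const_mul b)).add (h2.const_mul c)
  refine this.congr_deriv ?_
  ring

lemma log_aux1 (t : ℝ) (h0 : 0 < t) (h1 : t < 1) :
    Real.log t < -3/2 + 2*t - t^2/2 := by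
  set ψ : ℝ → ℝ := fun x => -3/2 + 2*x + (-1/2)*x^2 - Real.log x with hψ
  have hd : ∀ x : ℝ, 0 < x → HasDerivAt ψ (2 - x - 1/x) x := by
    intro x hx
    have hlog : HasDerivAt Real.log (1/x) x := by
      simpa [one_div] using Real.hasDerivAt_log (ne_of_gt hx)
    have := (hasDerivAt_poly (-3/2) 2 (-1/2) x).sub hlog
    refine this.congr_deriv ?_
    ring
  have hcont : ContinuousOn ψ (Icc t 1) := by
    intro x hx
    exact ((hd x (lt_of_lt_of_le h0 hx.1)).continuousAt).continuousWithinAt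
  have hderiv : ∀ x ∈ interior (Icc t 1), deriv ψ x < 0 := by
    intro x hx
    rw [interior_Icc] at hx
    have hx0 : 0 < x := lt_trans h0 hx.1
    rw [(hd x hx0).deriv]
    have he : 2 - x - 1/x = -((x-1)^2)/x := by field_simp; ring
    rw [he]
    apply div_neg_of_neg_of_pos _ hx0
    have hne : x - 1 ≠ 0 := sub_ne_zero.2 (ne_of_lt hx.2)
    have : (0:ℝ) < (x-1)^2 := by positivity
    linarith
  have hanti := strictAntiOn_of_deriv_neg (convex_Icc t 1) hcont hderiv
  have := hanti (left_mem_Icc.2 h1.le) (right_mem_Icc.2 h1.le) h1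
  have hψ1 : ψ 1 = 0 := by norm_num [hψ]
  rw [hψ1] at this
  simp only [hψ] at this
  linarith

lemma log_aux2 (s : ℝ) (h1 : 1 < s) : Real.log s < s/2 - 1/(2*s) := by
  set ψ : ℝ → ℝ := fun x => x/2 - (1/2)*x⁻¹ - Real.log x with hψ
  have hd : ∀ x : ℝ, 0 < x → HasDerivAt ψ (1/2 + (1/2)*(x^2)⁻¹ - 1/x) x := by
    intro x hx
    have hlog : HasDerivAt Real.log (1/x) x := by
      simpa [one_div] using Real.hasDerivAt_log (ne_of_gt hx)
    have hinv : HasDerivAt (fun y : ℝ => y⁻¹) (-(x^2)⁻¹) x := hasDerivAt_inv (ne_of_gt hx)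
    have := (((hasDerivAt_id x).div_const 2).sub (hinv.const_mul (1/2))).sub hlog
    refine this.congr_deriv ?_
    ring
  have hcont : ContinuousOn ψ (Icc 1 s) := by
    intro x hx
    exact ((hd x (lt_of_lt_of_le one_pos hx.1)).continuousAt).continuousWithinAt
  have hderiv : ∀ x ∈ interior (Icc 1 s), 0 < deriv ψ x := by
    intro x hx
    rw [interior_Icc] at hx
    have hx0 : 0 < x := lt_trans one_pos hx.1
    rw [(hd x hx0).deriv]
    have he : 1/2 + (1/2)*(x^2)⁻¹ - 1/x = (x-1)^2/(2*x^2) := by field_simp; ring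
    rw [he]
    have hne : x - 1 ≠ 0 := sub_ne_zero.2 (ne_of_gt hx.1)
    have h2 : (0:ℝ) < (x-1)^2 := by positivity
    exact div_pos h2 (by positivity)
  have hmono := strictMonoOn_of_deriv_pos (convex_Icc 1 s) hcont hderiv
  have := hmono (left_mem_Icc.2 h1.le) (right_mem_Icc.2 h1.le) h1
  have hψ1 : ψ 1 = 0 := by norm_num [hψ]
  rw [hψ1] at this
  simp only [hψ] at this
  have hs0 : s ≠ 0 := by positivity
  have h2 : 0 < s/2 - (1/2)*s⁻¹ - Real.log s := this
  have he : (1/2)*s⁻¹ = 1/(2*s) := by field_simp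
  linarith [he ▸ h2]

lemma qfun_of_nonneg (lam ε z x : ℝ) (hx : 0 ≤ x) :
    qfun lam ε z x = 1/(2*lam) * (x - z)^2 + Real.log (1 + x/ε) := by
  simp [qfun, logpen, abs_of_nonneg hx]

lemma hasDerivAt_Qp (lam ε z x : ℝ) (hε : 0 < ε) (hlam : 0 < lam) (hx : 0 < x) :
    HasDerivAt (fun y => 1/(2*lam) * (y - z)^2 + Real.log (1 + y/ε))
      (((x - z)*(ε + x) + lam) / (lam * (ε + x))) x := by
  have h1 : HasDerivAt (fun y : ℝ => (y - z)^2) (2*(x-z)) x := by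
    simpa using ((hasDerivAt_id x).sub_const z).fun_pow 2
  have h2 : HasDerivAt (fun y : ℝ => 1 + y/ε) (1/ε) x :=
    ((hasDerivAt_id x).div_const ε).const_add 1
  have h3 : (1 + x/ε) ≠ 0 := by positivity
  have h5 := (h1.const_mul (1/(2*lam))).add (h2.log h3)
  refine h5.congr_deriv ?_
  have hεx : ε + x ≠ 0 := by positivity
  have hl : lam ≠ 0 := ne_of_gt hlam
  have he : ε ≠ 0 := ne_of_gt hε
  field_simp

lemma Qp_min (lam ε z : ℝ) (hε : 0 < ε) (hlam : 0 < lam) (h : ε < Real.sqrt lam)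
    (hz : 2 * Real.sqrt lam - ε ≤ z) :
    ∀ x, Real.sqrt lam - ε ≤ x → qfun lam ε z (r2 lam ε z) ≤ qfun lam ε z x := by
  set L := Real.sqrt lam with hL
  have hsl : L^2 = lam := Real.sq_sqrt hlam.le
  have hL0 : 0 < L := lt_trans hε h
  have ha0 : 0 < L - ε := sub_pos.2 h
  have harg : 0 ≤ (z+ε)^2/4 - lam := by
    nlinarith [mul_nonneg (by linarith : (0:ℝ) ≤ z + ε - 2*L)
      (by linarith : (0:ℝ) ≤ z + ε + 2*L)]
  set s := Real.sqrt ((z+ε)^2/4 - lam) with hs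
  have hs2 : s^2 = (z+ε)^2/4 - lam := Real.sq_sqrt harg
  have hs0 : 0 ≤ s := Real.sqrt_nonneg _
  have hR : r2 lam ε z = (z-ε)/2 + s := rfl
  have haR : L - ε ≤ (z-ε)/2 + s := by linarith
  have hPa : ((z-ε)/2 - (L-ε))^2 ≤ s^2 := by
    rw [hs2]
    nlinarith [mul_nonneg hL0.le (by linarith : (0:ℝ) ≤ z + ε - 2*L)]
  have h1 : (z-ε)/2 - (L-ε) ≤ s := by nlinarith [hPa, hs0]
  set Qp : ℝ → ℝ := fun y => 1/(2*lam) * (y - z)^2 + Real.log (1 + y/ε) with hQp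
  have hanti : AntitoneOn Qp (Icc (L-ε) ((z-ε)/2 + s)) := by
    apply antitoneOn_of_deriv_nonpos (convex_Icc _ _)
    · intro x hx
      have hx0 : 0 < x := lt_of_lt_of_le ha0 hx.1
      exact (hasDerivAt_Qp lam ε z x hε hlam hx0).continuousAt.continuousWithinAt
    · intro x hx
      rw [interior_Icc] at hx
      have hx0 : 0 < x := lt_of_lt_of_le ha0 hx.1.le
      exact (hasDerivAt_Qp lam ε z x hε hlam hx0).differentiableAt.differentiableWithinAt
    · intro x hx
      rw [interior_Icc] at hx
      have hx0 : 0 < x := lt_of_lt_of_le ha0 hx.1.le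
      rw [(hasDerivAt_Qp lam ε z x hε hlam hx0).deriv]
      apply div_nonpos_of_nonpos_of_nonneg
      · have hup : x - (z-ε)/2 ≤ s := by linarith [hx.2]
        have hlo : (z-ε)/2 - x ≤ s := by linarith [hx.1, h1]
        have key : (x - (z-ε)/2)^2 ≤ s^2 := by
          nlinarith [mul_nonneg (by linarith : (0:ℝ) ≤ s - (x - (z-ε)/2))
            (by linarith : (0:ℝ) ≤ s + (x - (z-ε)/2))]
        have hid : (x-z)*(ε+x) + lam = (x - (z-ε)/2)^2 - s^2 := by rw [hs2]; ring
        linarith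
      · exact mul_nonneg hlam.le (by linarith)
  have hmono : MonotoneOn Qp (Ici ((z-ε)/2 + s)) := by
    apply monotoneOn_of_deriv_nonneg (convex_Ici _)
    · intro x hx
      have hx0 : 0 < x := lt_of_lt_of_le ha0 (le_trans haR hx)
      exact (hasDerivAt_Qp lam ε z x hε hlam hx0).continuousAt.continuousWithinAt
    · intro x hx
      rw [interior_Ici] at hx
      have hx0 : 0 < x := lt_of_lt_of_le ha0 (le_trans haR hx.le)
      exact (hasDerivAt_Qp lam ε z x hε hlam hx0).differentiableAt.differentiableWithinAt
    · intro x hx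
      rw [interior_Ici] at hx
      have hx0 : 0 < x := lt_of_lt_of_le ha0 (le_trans haR hx.le)
      rw [(hasDerivAt_Qp lam ε z x hε hlam hx0).deriv]
      apply div_nonneg _ (mul_nonneg hlam.le (by linarith))
      have hid : (x-z)*(ε+x) + lam = (x - (z-ε)/2)^2 - s^2 := by rw [hs2]; ring
      have hge : s ≤ x - (z-ε)/2 := by linarith [(mem_Ioi.1 hx).le]
      nlinarith [hs0]
  intro x hx
  have hx0 : (0:ℝ) ≤ x := le_trans ha0.le hx
  have hR0 : (0:ℝ) ≤ (z-ε)/2 + s := le_trans ha0.le haR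
  rw [hR, qfun_of_nonneg lam ε z _ hR0, qfun_of_nonneg lam ε z _ hx0]
  rcases le_total x ((z-ε)/2 + s) with hc | hc
  · exact hanti ⟨hx, hc⟩ (right_mem_Icc.2 haR) hc
  · exact hmono self_mem_Ici hc hc

lemma rfun_strict (lam ε : ℝ) (hε : 0 < ε) (hlam : 0 < lam) (h : ε < Real.sqrt lam) :
    ∀ z1 z2, 2 * Real.sqrt lam - ε ≤ z1 → z1 < z2 →
      rfun lam ε z2 < rfun lam ε z1 := by
  intro z1 z2 hz1 h12
  have hz2 : 2 * Real.sqrt lam - ε ≤ z2 := le_of_lt (lt_of_le_of_lt hz1 h12)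
  have ha0 : 0 < Real.sqrt lam - ε := sub_pos.2 h
  have hr21 : Real.sqrt lam - ε ≤ r2 lam ε z1 := by
    have := Real.sqrt_nonneg ((z1 + ε)^2/4 - lam)
    unfold r2; linarith
  have hmin := Qp_min lam ε z2 hε hlam h hz2 (r2 lam ε z1) hr21
  have key : qfun lam ε z2 (r2 lam ε z1) - qfun lam ε z2 0
      = (rfun lam ε z1 - (r2 lam ε z1) * (z2 - z1) / lam)
        + qfun lam ε z1 0 - qfun lam ε z1 0 := by
    unfold rfun qfun
    ring
  have hpos : 0 < (r2 lam ε z1) * (z2 - z1) / lam :=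
    div_pos (mul_pos (by linarith) (by linarith)) hlam
  have hr : rfun lam ε z2 = qfun lam ε z2 (r2 lam ε z2) - qfun lam ε z2 0 := rfl
  linarith [hmin, key]

lemma rfun_pos_left (ε lam : ℝ) (hε : 0 < ε) (hlam : 0 < lam)
    (h : ε < Real.sqrt lam) : 0 < rfun lam ε (2 * Real.sqrt lam - ε) := by
  set L := Real.sqrt lam with hL
  have hsl : L^2 = lam := Real.sq_sqrt hlam.le
  have hL0 : 0 < L := lt_trans hε h
  have ha0 : 0 < L - ε := sub_pos.2 h
  have hz0r2 : r2 lam ε (2*L - ε) = L - ε := by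
    unfold r2
    have harg : (2*L - ε + ε)^2/4 - lam = 0 := by linear_combination hsl
    rw [harg, Real.sqrt_zero]
    ring
  have haux := log_aux1 (ε/L) (by positivity) ((div_lt_one hL0).2 h)
  rw [rfun, hz0r2, qfun_of_nonneg lam ε _ _ ha0.le, qfun_of_nonneg lam ε _ _ le_rfl]
  have e1 : 1 + (L-ε)/ε = L/ε := by field_simp; ring
  have e2 : ((L-ε) - (2*L-ε))^2 = lam := by linear_combination hsl
  have ht : Real.log (L/ε) = -Real.log (ε/L) := by
    rw [← Real.log_inv, inv_div]
  have e3 : 1/(2*lam)*((0:ℝ) - (2*L-ε))^2 = 2 - 2*(ε/L) + (ε/L)^2/2 := by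
    rw [← hsl]
    field_simp
    ring
  have e4 : 1/(2*lam)*lam = (1:ℝ)/2 := by field_simp
  rw [e1, e2, ht]
  simp only [zero_div, add_zero, Real.log_one]
  rw [e3, e4]
  linarith [haux]

lemma rfun_neg_right (ε lam : ℝ) (hε : 0 < ε) (hlam : 0 < lam)
    (h : ε < Real.sqrt lam) : rfun lam ε (lam/ε) < 0 := by
  set L := Real.sqrt lam with hL
  have hsl : L^2 = lam := Real.sq_sqrt hlam.le
  have hL0 : 0 < L := lt_trans hε h
  have hz : 2*L - ε ≤ lam/ε := by
    rw [le_div_iff₀ hε]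
    nlinarith [sq_nonneg (L - ε)]
  have hx' : L - ε ≤ lam/ε - ε := by
    have : L ≤ lam/ε := by
      rw [le_div_iff₀ hε]; nlinarith
    linarith
  have hmin := Qp_min lam ε (lam/ε) hε hlam h hz (lam/ε - ε) hx'
  have hx0 : (0:ℝ) ≤ lam/ε - ε := le_trans (sub_pos.2 h).le hx'
  rw [qfun_of_nonneg lam ε _ _ hx0] at hmin
  have e1 : 1 + (lam/ε - ε)/ε = lam/ε^2 := by field_simp; ring
  have e2 : (lam/ε - ε - lam/ε)^2 = ε^2 := by ring
  rw [e1, e2] at hmin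
  have hs1 : 1 < lam/ε^2 := by
    rw [lt_div_iff₀ (by positivity)]
    nlinarith
  have haux := log_aux2 (lam/ε^2) hs1
  have hq0 : qfun lam ε (lam/ε) 0 = 1/(2*lam)*(lam/ε)^2 := by
    rw [qfun_of_nonneg lam ε _ _ le_rfl]
    simp [Real.log_one]
  have hr : rfun lam ε (lam/ε) = qfun lam ε (lam/ε) (r2 lam ε (lam/ε)) - qfun lam ε (lam/ε) 0 := rfl
  have e3 : 1/(2*lam)*ε^2 = 1/(2*(lam/ε^2)) := by field_simp
  have e4 : 1/(2*lam)*(lam/ε)^2 = (lam/ε^2)/2 := by field_simp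
  rw [hr, hq0]
  calc qfun lam ε (lam/ε) (r2 lam ε (lam/ε)) - 1/(2*lam)*(lam/ε)^2
      ≤ 1/(2*lam)*ε^2 + Real.log (lam/ε^2) - 1/(2*lam)*(lam/ε)^2 := by linarith [hmin]
    _ < 0 := by rw [e3, e4]; linarith [haux]

end Aux

/-- sign changes and the unique root `z*` of `r` when `√λ > ε`. -/
theorem rfun_unique_root (ε lam : ℝ) (hε : 0 < ε) (hlam : 0 < lam)
    (h : ε < Real.sqrt lam) :
    0 < rfun lam ε (2 * Real.sqrt lam - ε) ∧
    rfun lam ε (lam / ε) < 0 ∧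
    (∃! zs : ℝ, zs ∈ Set.Ioo (2 * Real.sqrt lam - ε) (lam / ε) ∧
      rfun lam ε zs = 0) := by
  have hC := rfun_pos_left ε lam hε hlam h
  have hD := rfun_neg_right ε lam hε hlam h
  have hz01 : 2 * Real.sqrt lam - ε < lam / ε := by
    rw [lt_div_iff₀ hε]
    nlinarith [Real.sq_sqrt hlam.le, sq_nonneg (Real.sqrt lam - ε)]
  have hr2c : Continuous (fun z => r2 lam ε z) := by
    unfold r2
    exact ((continuous_id.sub continuous_const).div_const 2).add
      (Real.continuous_sqrt.comp (by fun_prop))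
  have hlogc : Continuous (fun z => Real.log (1 + |r2 lam ε z| / ε)) :=
    Continuous.log (continuous_const.add (hr2c.abs.div_const ε)) (fun z => by positivity)
  have hcont : Continuous (fun z => rfun lam ε z) := by
    unfold rfun qfun logpen
    apply Continuous.sub
    · exact (continuous_const.mul ((hr2c.sub continuous_id).pow 2)).add hlogc
    · exact (continuous_const.mul ((continuous_const.sub continuous_id).pow 2)).add
        continuous_const
  have him := intermediate_value_Ioo' hz01.le hcont.continuousOn
    (Set.mem_Ioo.2 ⟨hD, hC⟩)
  obtain ⟨zs, hzsm, hzs0⟩ := him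
  simp only [] at hzs0
  have hzs0' : rfun lam ε zs = 0 := hzs0
  refine ⟨hC, hD, zs, ⟨hzsm, hzs0'⟩, ?_⟩
  intro y hy
  obtain ⟨hym, hy0⟩ := hy
  rcases lt_trichotomy y zs with hlt | heq | hgt
  · exfalso
    have := rfun_strict lam ε hε hlam h y zs (le_of_lt hym.1) hlt
    rw [hzs0', hy0] at this; exact lt_irrefl 0 this
  · exact heq
  · exfalso
    have := rfun_strict lam ε hε hlam h zs y (le_of_lt hzsm.1) hgt
    rw [hzs0', hy0] at this; exact lt_irrefl 0 this
end

section
/- Let ε > 0, λ > 0, z > 0, and let the sequence (x^{(k)})_{k≥0} be generated by the reweighted ℓ₁ iteration from an initial guess x^{(0)} ≥ 0. Suppose x^{(k)} > 0 for all k ≥ 1. Then: if x^{(1)} > x^{(0)}, the sequence (x^{(k)}) is strictly increasing; if x^{(1)} < x^{(0)}, it is strictly decreasing; and if x^{(1)} = x^{(0)}, it is constant. -/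
open Real Filter

/-- monotonicity of the reweighted ℓ₁ sequence with positive iterates. -/
theorem iterRW_monotone (ε lam z : ℝ) (hε : 0 < ε) (hlam : 0 < lam) (hz : 0 < z)
    (x : ℕ → ℝ) (hx0 : 0 ≤ x 0) (hiter : IterRW lam ε z x)
    (hpos : ∀ k : ℕ, 1 ≤ k → 0 < x k) :
    (x 0 < x 1 → StrictMono x) ∧
    (x 1 < x 0 → StrictAnti x) ∧
    (x 1 = x 0 → ∀ k : ℕ, x k = x 0) := by
  have hnn : ∀ k : ℕ, 0 ≤ x k := by
    intro k
    cases k with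
    | zero => exact hx0
    | succ n => exact (hpos (n + 1) (Nat.le_add_left 1 n)).le
  have hstep : ∀ k : ℕ, x (k + 1) = z - lam / (ε + x k) := by
    intro k
    have h := hiter k
    rw [abs_of_nonneg (hnn k), abs_of_pos hz] at h
    by_cases hle : z ≤ lam / (ε + x k)
    · rw [if_pos hle] at h
      exact absurd (h ▸ hpos (k + 1) (Nat.le_add_left 1 k)) (lt_irrefl 0)
    · rw [if_neg hle, Real.sign_of_pos hz, one_mul] at h
      exact h
  have hmono : ∀ a b : ℝ, 0 ≤ a → 0 ≤ b → a < b →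
      z - lam / (ε + a) < z - lam / (ε + b) := by
    intro a b ha hb hab
    have h1 : 0 < ε + a := by linarith
    have : lam / (ε + b) < lam / (ε + a) :=
      div_lt_div_of_pos_left hlam h1 (by linarith)
    linarith
  refine ⟨?_, ?_, ?_⟩
  · intro h01
    apply strictMono_nat_of_lt_succ
    intro k
    induction k with
    | zero => exact h01
    | succ n ih =>
      rw [hstep n, hstep (n + 1)]
      exact hmono _ _ (hnn n) (hnn (n + 1)) ih
  · intro h01
    apply strictAnti_nat_of_succ_lt
    intro k
    induction k with
    | zero => exact h01
    | succ n ih =>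
      rw [hstep n, hstep (n + 1)]
      exact hmono _ _ (hnn (n + 1)) (hnn n) ih
  · intro h01 k
    induction k with
    | zero => rfl
    | succ n ih =>
      rw [hstep n, ih, ← hstep 0, h01]
end

section
/- Let ε > 0, λ > 0, z ≥ 0, and let the sequence (x^{(k)})_{k≥0} be generated by the reweighted ℓ₁ iteration from an initial guess x^{(0)} ≥ 0. If there exists k₀ ≥ 0 with x^{(k₀)} = 0, then (x^{(k)}) converges: its limit is 0 if z ≤ λ/ε, and its limit is r₂(z) = (z − ε)/2 + √((z + ε)²/4 − λ) if z > λ/ε. -/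
open Real Filter

/-- convergence of the reweighted ℓ₁ sequence when some iterate is 0. -/
theorem iterRW_conv_of_zero (ε lam z : ℝ) (hε : 0 < ε) (hlam : 0 < lam) (hz : 0 ≤ z)
    (x : ℕ → ℝ) (hx0 : 0 ≤ x 0) (hiter : IterRW lam ε z x)
    (h0 : ∃ k0 : ℕ, x k0 = 0) :
    (z ≤ lam / ε → Filter.Tendsto x Filter.atTop (nhds 0)) ∧
    (lam / ε < z → Filter.Tendsto x Filter.atTop (nhds (r2 lam ε z))) := by
  obtain ⟨k0, hk0⟩ := h0
  constructor
  · intro hzle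
    have hall : ∀ n, x (k0 + n) = 0 := by
      intro n
      induction n with
      | zero => simpa using hk0
      | succ n ih =>
        have h := hiter (k0 + n)
        rw [show k0 + (n + 1) = (k0 + n) + 1 from rfl, h, ih]
        simp only [abs_zero, add_zero, abs_of_nonneg hz]
        rw [if_pos hzle]
    apply tendsto_atTop_of_eventually_const (i₀ := k0)
    intro k hk
    have : x (k0 + (k - k0)) = 0 := hall _
    rwa [Nat.add_sub_cancel' hk] at this
  · intro hlt
    have hz0 : 0 < z := lt_trans (div_pos hlam hε) hlt
    have hlez : lam < z * ε := by
      have := (div_lt_iff₀ hε).mp hlt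
      linarith
    set s := Real.sqrt ((z + ε) ^ 2 / 4 - lam) with hs_def
    have harg : 0 < (z + ε) ^ 2 / 4 - lam := by nlinarith [sq_nonneg (z - ε)]
    have hs0 : 0 ≤ s := Real.sqrt_nonneg _
    have hs2 : s ^ 2 = (z + ε) ^ 2 / 4 - lam := Real.sq_sqrt harg.le
    have hr2 : r2 lam ε z = (z - ε) / 2 + s := rfl
    have hr2pos : 0 < r2 lam ε z := by
      rw [hr2]
      nlinarith
    have hεr2 : 0 < ε + r2 lam ε z := by linarith
    have hfixmul : (z - r2 lam ε z) * (ε + r2 lam ε z) = lam := by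
      rw [hr2]; linear_combination (-1 : ℝ) * hs2
    have hfix : z - lam / (ε + r2 lam ε z) = r2 lam ε z := by
      have h := hfixmul
      field_simp
      linear_combination h
    set y : ℕ → ℝ := fun n => x (k0 + n) with hy_def
    have hy0 : y 0 = 0 := by simp only [hy_def, add_zero]; exact hk0
    have hstep : ∀ n, 0 ≤ y n → y (n + 1) = z - lam / (ε + y n) := by
      intro n hn
      have hden : 0 < ε + y n := by linarith
      have hcond : lam / (ε + y n) < |z| := by
        rw [abs_of_nonneg hz]
        calc lam / (ε + y n) ≤ lam / ε := by
              apply div_le_div_of_nonneg_left hlam.le hε; linarith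
          _ < z := hlt
      have h := hiter (k0 + n)
      have : y (n + 1) = x ((k0 + n) + 1) := by
        simp only [hy_def]; ring_nf
      rw [this, h, abs_of_nonneg hn, if_neg (not_le.mpr hcond),
        Real.sign_of_pos hz0, abs_of_nonneg hz, one_mul]
    have hbnd : ∀ n, 0 ≤ y n ∧ y n ≤ r2 lam ε z := by
      intro n
      induction n with
      | zero => rw [hy0]; exact ⟨le_rfl, hr2pos.le⟩
      | succ n ih =>
        obtain ⟨h1, h2⟩ := ih
        rw [hstep n h1]
        constructor
        · have : lam / (ε + y n) ≤ lam / ε := by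
            apply div_le_div_of_nonneg_left hlam.le hε; linarith
          have := hlt
          have h3 : lam / ε < z := hlt
          linarith
        · rw [← hfix]
          have : lam / (ε + r2 lam ε z) ≤ lam / (ε + y n) := by
            apply div_le_div_of_nonneg_left hlam.le; linarith; linarith
          linarith
    have hmono : Monotone y := by
      apply monotone_nat_of_le_succ
      intro n
      induction n with
      | zero =>
        rw [hy0]; exact (hbnd 1).1
      | succ n ih =>
        rw [hstep n (hbnd n).1, hstep (n + 1) (hbnd (n + 1)).1]
        have hd1 : 0 < ε + y n := by have := (hbnd n).1; linarith
        have : lam / (ε + y (n + 1)) ≤ lam / (ε + y n) := by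
          apply div_le_div_of_nonneg_left hlam.le hd1; linarith
        linarith
    rcases tendsto_of_monotone hmono with htop | ⟨L, hL⟩
    · exfalso
      obtain ⟨n, hn⟩ := (htop.eventually_gt_atTop (r2 lam ε z)).exists
      exact absurd (hbnd n).2 (not_le.mpr hn)
    · have hL1 : z - lam / ε ≤ L := by
        apply ge_of_tendsto hL
        filter_upwards [eventually_ge_atTop 1] with n hn
        have : y 1 ≤ y n := hmono hn
        have h01 : y 1 = z - lam / ε := by
          have := hstep 0 (hbnd 0).1
          rw [this, hy0, add_zero]
        linarith
      have hLpos : 0 < L := by linarith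
      have hεL : 0 < ε + L := by linarith
      have hLfix : L = z - lam / (ε + L) := by
        have h1 : Tendsto (fun n => y (n + 1)) atTop (nhds L) :=
          hL.comp (tendsto_add_atTop_nat 1)
        have h2 : Tendsto (fun n => z - lam / (ε + y n)) atTop (nhds (z - lam / (ε + L))) := by
          apply Tendsto.sub tendsto_const_nhds
          apply Tendsto.div tendsto_const_nhds
          · exact Tendsto.add tendsto_const_nhds hL
          · exact ne_of_gt hεL
        have heq : (fun n => y (n + 1)) = fun n => z - lam / (ε + y n) := by
          funext n; exact hstep n (hbnd n).1
        rw [heq] at h1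
        exact tendsto_nhds_unique h1 h2
      have hquad : (z - L) * (ε + L) = lam := by
        have hdl : lam / (ε + L) = z - L := by linarith
        rw [← hdl]; exact div_mul_cancel₀ lam hεL.ne'
      have hLr2 : L = r2 lam ε z := by
        have hfac : (L - r2 lam ε z) * (z - ε - L - r2 lam ε z) = 0 := by
          linear_combination hquad - hfixmul
        rcases mul_eq_zero.mp hfac with h | h
        · linarith
        · exfalso
          have hLr : L = z - ε - r2 lam ε z := by linarith
          rw [hr2] at hLr
          nlinarith [hs2, hs0, hLpos, hlez]
      rw [← hLr2]
      have : Tendsto (fun n => x (n + k0)) atTop (nhds L) := by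
        have : (fun n => x (n + k0)) = y := by
          funext n; simp only [hy_def, Nat.add_comm]
        rw [this]; exact hL
      exact (tendsto_add_atTop_iff_nat k0).mp this
end

section
/- Let ε > 0, λ > 0, z ≥ λ/ε, and let the sequence (x^{(k)})_{k≥0} be generated by the reweighted ℓ₁ iteration from an initial guess x^{(0)} > 0. Then x^{(k)} > 0 for all k ≥ 0, and the sequence (x^{(k)}) converges to r₂(z) = (z − ε)/2 + √((z + ε)²/4 − λ). -/
open Real Filter

set_option maxHeartbeats 1000000 in
/-- for `z ≥ λ/ε` and positive start, the iterates stay positive and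
converge to `r₂(z)`. -/
theorem iterRW_conv_large_z (ε lam z : ℝ) (hε : 0 < ε) (hlam : 0 < lam)
    (hz : lam / ε ≤ z)
    (x : ℕ → ℝ) (hx0 : 0 < x 0) (hiter : IterRW lam ε z x) :
    (∀ k : ℕ, 0 < x k) ∧
    Filter.Tendsto x Filter.atTop (nhds (r2 lam ε z)) := by
  have hzpos : 0 < z := lt_of_lt_of_le (div_pos hlam hε) hz
  have hle : lam ≤ z * ε := (div_le_iff₀ hε).mp hz
  have hD : 0 ≤ (z + ε) ^ 2 / 4 - lam := by nlinarith [sq_nonneg (z - ε)]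
  obtain ⟨s, hs0, hs2, hrs⟩ : ∃ s : ℝ, 0 ≤ s ∧ s ^ 2 = (z + ε) ^ 2 / 4 - lam ∧
      r2 lam ε z = (z - ε) / 2 + s :=
    ⟨Real.sqrt ((z + ε) ^ 2 / 4 - lam), Real.sqrt_nonneg _, Real.sq_sqrt hD, rfl⟩
  have hsge : (z - ε) / 2 ≤ s := by
    nlinarith [hs2, hle, hs0, sq_nonneg (s - (z - ε) / 2), sq_nonneg (s + (z - ε) / 2)]
  have hsge' : (ε - z) / 2 ≤ s := by
    nlinarith [hs2, hle, hs0, sq_nonneg (s - (ε - z) / 2), sq_nonneg (s + (ε - z) / 2)]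
  obtain ⟨a, haa⟩ : ∃ a : ℝ, a = (z - ε) / 2 + s := ⟨_, rfl⟩
  have hra : r2 lam ε z = a := by rw [hrs, haa]
  have ha0 : 0 ≤ a := by rw [haa]; linarith
  have hεa : 0 < ε + a := by linarith
  -- key quadratic identity
  have hkey : ∀ t : ℝ, (z - t) * (ε + t) - lam = (a - t) * (t - ((z - ε) / 2 - s)) := by
    intro t
    rw [haa]
    linear_combination -hs2
  have hfa : (z - a) * (ε + a) = lam := by linear_combination hkey a
  -- step formula and positivity
  have hstep : ∀ k, 0 < x k → x (k + 1) = z - lam / (ε + x k) := by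
    intro k hk
    have h1 : lam / (ε + x k) < lam / ε :=
      div_lt_div_of_pos_left hlam hε (lt_add_of_pos_right ε hk)
    have h2 : lam / (ε + x k) < z := lt_of_lt_of_le h1 hz
    rw [hiter k, abs_of_pos hk, abs_of_pos hzpos, if_neg (not_le.mpr h2),
      Real.sign_of_pos hzpos]
    ring
  have hpos : ∀ k, 0 < x k := by
    intro k
    induction k with
    | zero => exact hx0
    | succ n ih =>
      have h1 : lam / (ε + x n) < lam / ε :=
        div_lt_div_of_pos_left hlam hε (lt_add_of_pos_right ε ih)
      have h2 : lam / (ε + x n) < z := lt_of_lt_of_le h1 hz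
      rw [hstep n ih]; linarith
  refine ⟨hpos, ?_⟩
  -- difference identity: f(t) - a = lam * (t - a) / ((ε+t)(ε+a))
  have hdiff : ∀ k, x (k + 1) - a = lam * (x k - a) / ((ε + x k) * (ε + a)) := by
    intro k
    have hxk := hpos k
    have hεx : (0:ℝ) < ε + x k := by linarith
    have hza : z - a = lam / (ε + a) := by
      rw [eq_div_iff (ne_of_gt hεa)]; linear_combination hfa
    rw [hstep k hxk]
    have e1 : z - lam / (ε + x k) - a = lam / (ε + a) - lam / (ε + x k) := by
      linarith [hza]
    rw [e1, div_sub_div _ _ (ne_of_gt hεa) (ne_of_gt hεx)]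
    rw [div_eq_div_iff (by positivity) (by positivity)]
    ring
  rw [hra]
  rcases le_or_gt (x 0) a with hcase | hcase
  · -- increasing case
    have hub : ∀ k, x k ≤ a := by
      intro k
      induction k with
      | zero => exact hcase
      | succ n ih =>
        have hεx : (0:ℝ) < ε + x n := by linarith [hpos n]
        have h := hdiff n
        have : lam * (x n - a) / ((ε + x n) * (ε + a)) ≤ 0 := by
          apply div_nonpos_of_nonpos_of_nonneg
          · nlinarith
          · positivity
        linarith
    have hmono : Monotone x := by
      apply monotone_nat_of_le_succ
      intro n
      have hxn := hpos n
      have hεx : (0:ℝ) < ε + x n := by linarith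
      have hk := hkey (x n)
      have hr1 : (z - ε) / 2 - s ≤ 0 := by linarith
      have hq : 0 ≤ (z - x n) * (ε + x n) - lam := by nlinarith [hub n]
      rw [hstep n hxn, ← sub_nonneg]
      have : z - lam / (ε + x n) - x n = ((z - x n) * (ε + x n) - lam) / (ε + x n) := by
        field_simp; ring
      rw [this]
      exact div_nonneg hq (le_of_lt hεx)
    have hbdd : BddAbove (Set.range x) := ⟨a, by rintro _ ⟨k, rfl⟩; exact hub k⟩
    have hL : Tendsto x atTop (nhds (⨆ k, x k)) := tendsto_atTop_ciSup hmono hbdd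
    obtain ⟨L, hLd⟩ : ∃ L : ℝ, L = ⨆ k, x k := ⟨_, rfl⟩
    rw [← hLd] at hL
    have hL0 : 0 < L := hLd ▸ lt_of_lt_of_le hx0 (le_ciSup hbdd 0)
    have hεL : (0:ℝ) < ε + L := by linarith
    have hshift : Tendsto (fun k => x (k + 1)) atTop (nhds L) :=
      hL.comp (tendsto_add_atTop_nat 1)
    have hshift2 : Tendsto (fun k => x (k + 1)) atTop (nhds (z - lam / (ε + L))) := by
      have : (fun k => x (k + 1)) = fun k => z - lam / (ε + x k) := by
        funext k; exact hstep k (hpos k)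
      rw [this]
      exact tendsto_const_nhds.sub
        (tendsto_const_nhds.div (tendsto_const_nhds.add hL) (ne_of_gt hεL))
    have hfixL : z - lam / (ε + L) = L := tendsto_nhds_unique hshift2 hshift
    have hLub : L ≤ a := hLd ▸ ciSup_le hub
    have hqL : (z - L) * (ε + L) = lam := by
      have : lam / (ε + L) = z - L := by linarith
      field_simp at this; linarith
    have heq : (a - L) * (L - ((z - ε) / 2 - s)) = 0 := by
      have := hkey L; linarith
    have hLa : L = a := by
      rcases mul_eq_zero.mp heq with h | h
      · linarith
      · exfalso; have hr1 : (z - ε) / 2 - s ≤ 0 := by linarith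
        linarith
    rwa [hLa] at hL
  · -- decreasing case
    have hlb : ∀ k, a ≤ x k := by
      intro k
      induction k with
      | zero => exact le_of_lt hcase
      | succ n ih =>
        have hεx : (0:ℝ) < ε + x n := by linarith [hpos n]
        have h := hdiff n
        have : 0 ≤ lam * (x n - a) / ((ε + x n) * (ε + a)) := by
          apply div_nonneg
          · nlinarith
          · positivity
        linarith
    have hanti : Antitone x := by
      apply antitone_nat_of_succ_le
      intro n
      have hxn := hpos n
      have hεx : (0:ℝ) < ε + x n := by linarith
      have hk := hkey (x n)
      have hq : (z - x n) * (ε + x n) - lam ≤ 0 := by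
        have hprod : (a - x n) * (x n - ((z - ε) / 2 - s)) ≤ 0 :=
          mul_nonpos_iff.mpr (Or.inr ⟨by linarith [hlb n], by linarith⟩)
        linarith [hk, hprod]
      rw [hstep n hxn, ← sub_nonpos]
      have : z - lam / (ε + x n) - x n = ((z - x n) * (ε + x n) - lam) / (ε + x n) := by
        field_simp; ring
      rw [this]
      exact div_nonpos_of_nonpos_of_nonneg hq (le_of_lt hεx)
    have hbdd : BddBelow (Set.range x) := ⟨a, by rintro _ ⟨k, rfl⟩; exact hlb k⟩
    have hL : Tendsto x atTop (nhds (⨅ k, x k)) := tendsto_atTop_ciInf hanti hbdd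
    obtain ⟨L, hLd⟩ : ∃ L : ℝ, L = ⨅ k, x k := ⟨_, rfl⟩
    rw [← hLd] at hL
    have hLa' : a ≤ L := hLd ▸ le_ciInf hlb
    have hεL : (0:ℝ) < ε + L := by linarith
    have hshift : Tendsto (fun k => x (k + 1)) atTop (nhds L) :=
      hL.comp (tendsto_add_atTop_nat 1)
    have hshift2 : Tendsto (fun k => x (k + 1)) atTop (nhds (z - lam / (ε + L))) := by
      have : (fun k => x (k + 1)) = fun k => z - lam / (ε + x k) := by
        funext k; exact hstep k (hpos k)
      rw [this]
      exact tendsto_const_nhds.sub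
        (tendsto_const_nhds.div (tendsto_const_nhds.add hL) (ne_of_gt hεL))
    have hfixL : z - lam / (ε + L) = L := tendsto_nhds_unique hshift2 hshift
    have hqL : (z - L) * (ε + L) = lam := by
      have : lam / (ε + L) = z - L := by linarith
      field_simp at this; linarith
    have heq : (a - L) * (L - ((z - ε) / 2 - s)) = 0 := by
      have := hkey L; linarith
    have hLa : L = a := by
      nlinarith [heq, hLa', hs0, sq_nonneg (L - a)]
    rwa [hLa] at hL
end

section
/- Let ε > 0 and λ > 0 with 2√λ − ε > 0. Let z ∈ (0, 2√λ − ε), and let the sequence (x^{(k)})_{k≥0} be generated by the reweighted ℓ₁ iteration from any initial guess x^{(0)} ≥ 0. Then the sequence (x^{(k)}) converges to 0. -/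
open Real Filter

/-- for `0 < z < 2√λ − ε`, the reweighted ℓ₁ sequence converges to 0. -/
theorem iterRW_conv_small_z (ε lam z : ℝ) (hε : 0 < ε) (hlam : 0 < lam)
    (h2 : 0 < 2 * Real.sqrt lam - ε)
    (hz : z ∈ Set.Ioo (0 : ℝ) (2 * Real.sqrt lam - ε))
    (x : ℕ → ℝ) (hx0 : 0 ≤ x 0) (hiter : IterRW lam ε z x) :
    Filter.Tendsto x Filter.atTop (nhds 0) := by
  obtain ⟨hz0, hz2⟩ := hz
  have hzabs : |z| = z := abs_of_pos hz0
  have hs : Real.sqrt lam ^ 2 = lam := Real.sq_sqrt hlam.le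
  set c : ℝ := lam - (z + ε) ^ 2 / 4 with hc
  have hcpos : 0 < c := by
    have h5 : 0 < 2 * Real.sqrt lam - (z + ε) := by linarith
    have h6 : 0 < 2 * Real.sqrt lam + (z + ε) := by linarith
    have h7 : 0 < 4 * lam - (z + ε) ^ 2 := by nlinarith [mul_pos h5 h6, hs]
    rw [hc]; linarith
  set δ : ℝ := c / (ε + x 0) with hδ
  have hA : 0 < ε + x 0 := by linarith
  have hδpos : 0 < δ := div_pos hcpos hA
  -- nonnegativity
  have hnn : ∀ k, 0 ≤ x k := by
    intro k
    induction k with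
    | zero => exact hx0
    | succ n ih =>
      rw [hiter n]
      split_ifs with h
      · exact le_refl 0
      · push_neg at h
        rw [Real.sign_of_pos hz0, hzabs, one_mul]
        rw [hzabs] at h
        linarith
  -- key step lemma
  have hstep : ∀ k, x k ≤ x 0 → x (k + 1) ≤ max 0 (x k - δ) := by
    intro k hk
    rw [hiter k]
    split_ifs with h
    · exact le_max_left _ _
    · push_neg at h
      rw [hzabs, abs_of_nonneg (hnn k)] at h ⊢
      rw [Real.sign_of_pos hz0, one_mul]
      set a : ℝ := ε + x k with ha'
      have ha : 0 < a := by have := hnn k; simp [ha']; linarith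
      have key : (z - x k) * a ≤ lam - c := by
        simp only [ha', hc]
        nlinarith [sq_nonneg (x k - (z - ε) / 2)]
      have h1 : z - x k ≤ (lam - c) / a := (le_div_iff₀ ha).mpr key
      have h2' : δ ≤ c / a := by
        rw [hδ]
        exact div_le_div_of_nonneg_left hcpos.le ha (by rw [ha']; linarith)
      have hsub : (lam - c) / a = lam / a - c / a := sub_div _ _ _
      have : z - lam / a ≤ x k - δ := by
        rw [hsub] at h1; linarith
      exact le_trans this (le_max_right _ _)
  -- bounds by induction
  have hbd : ∀ k : ℕ, x k ≤ x 0 ∧ x k ≤ max 0 (x 0 - (k : ℝ) * δ) := by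
    intro k
    induction k with
    | zero => constructor <;> simp [hx0]
    | succ n ih =>
      obtain ⟨ih1, ih2⟩ := ih
      have hst := hstep n ih1
      have hmax1 : max 0 (x n - δ) ≤ x n := by
        apply max_le (hnn n); linarith
      have hnext : x (n + 1) ≤ max 0 (x 0 - ((n : ℝ) + 1) * δ) := by
        have h3 : max 0 (x n - δ) ≤ max 0 (max 0 (x 0 - (n : ℝ) * δ) - δ) :=
          max_le_max le_rfl (by linarith)
        have h4 : max 0 (x 0 - (n : ℝ) * δ) - δ ≤ max 0 (x 0 - ((n : ℝ) + 1) * δ) := by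
          rcases le_total (x 0 - (n : ℝ) * δ) 0 with h | h
          · rw [max_eq_left h]
            have := le_max_left (0 : ℝ) (x 0 - ((n : ℝ) + 1) * δ)
            linarith
          · rw [max_eq_right h]
            have := le_max_right (0 : ℝ) (x 0 - ((n : ℝ) + 1) * δ)
            linarith [this]
        calc x (n + 1) ≤ max 0 (x n - δ) := hst
          _ ≤ max 0 (max 0 (x 0 - (n : ℝ) * δ) - δ) := h3
          _ ≤ max 0 (max 0 (x 0 - ((n : ℝ) + 1) * δ)) := by
              exact max_le_max le_rfl h4
          _ = max 0 (x 0 - ((n : ℝ) + 1) * δ) := by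
              rw [← max_assoc, max_self]
      constructor
      · calc x (n + 1) ≤ max 0 (x n - δ) := hst
          _ ≤ x n := hmax1
          _ ≤ x 0 := ih1
      · push_cast
        exact hnext
  -- eventually zero
  obtain ⟨N, hN⟩ := exists_nat_ge (x 0 / δ)
  have hev : ∀ k ≥ N, x k = 0 := by
    intro k hk
    have h1 : x 0 ≤ (k : ℝ) * δ := by
      have : x 0 / δ ≤ (k : ℝ) := le_trans hN (by exact_mod_cast hk)
      calc x 0 = (x 0 / δ) * δ := by field_simp
        _ ≤ (k : ℝ) * δ := by
            apply mul_le_mul_of_nonneg_right this hδpos.le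
    have h2 := (hbd k).2
    rw [max_eq_left (by linarith)] at h2
    exact le_antisymm h2 (hnn k)
  have heq : (fun _ : ℕ => (0 : ℝ)) =ᶠ[atTop] x := by
    filter_upwards [eventually_ge_atTop N] with k hk
    exact (hev k hk).symm
  exact Tendsto.congr' heq tendsto_const_nhds
end

section
/- Let ε > 0 and λ > 0 satisfy 2√λ − ε > 0 and √λ ≤ ε. Let z ∈ [2√λ − ε, λ/ε), and let the sequence (x^{(k)})_{k≥0} be generated by the reweighted ℓ₁ iteration from any initial guess x^{(0)} ≥ 0. Then the sequence (x^{(k)}) converges to 0. -/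
open Real Filter

/-- for `√λ ≤ ε` and `z ∈ [2√λ − ε, λ/ε)`, the reweighted ℓ₁
sequence converges to 0. -/
theorem iterRW_conv_mid_z_convex (ε lam z : ℝ) (hε : 0 < ε) (hlam : 0 < lam)
    (h2 : 0 < 2 * Real.sqrt lam - ε) (h : Real.sqrt lam ≤ ε)
    (hz : z ∈ Set.Ico (2 * Real.sqrt lam - ε) (lam / ε))
    (x : ℕ → ℝ) (hx0 : 0 ≤ x 0) (hiter : IterRW lam ε z x) :
    Filter.Tendsto x Filter.atTop (nhds 0) := by
  obtain ⟨hz1, hz2⟩ := hz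
  -- basic facts
  have hzpos : 0 < z := lt_of_lt_of_le h2 hz1
  have hlame : lam ≤ ε ^ 2 := by
    nlinarith [Real.sq_sqrt hlam.le, Real.sqrt_nonneg lam]
  have hzle : z < ε := lt_of_lt_of_le hz2 (by
    rw [div_le_iff₀ hε]; nlinarith)
  have hzeps : ε * z < lam := by
    have := (lt_div_iff₀ hε).mp hz2
    nlinarith
  set G : ℝ → ℝ := fun w => max 0 (z - lam / (ε + w)) with hG
  -- nonnegativity of the sequence
  have hpos : ∀ k, 0 ≤ x k := by
    intro k
    induction k with
    | zero => exact hx0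
    | succ n ih =>
      rw [hiter n]
      split
      · exact le_refl 0
      · next hlt =>
        push_neg at hlt
        rw [Real.sign_of_pos hzpos, one_mul, abs_of_pos hzpos]
        rw [abs_of_pos hzpos] at hlt
        linarith
  -- the recurrence in terms of G
  have hrec : ∀ k, x (k + 1) = G (x k) := by
    intro k
    rw [hiter k, abs_of_pos hzpos, Real.sign_of_pos hzpos, one_mul,
      abs_of_nonneg (hpos k), hG]
    split
    · next hle => simp only [max_eq_left (by linarith : z - lam / (ε + x k) ≤ 0)]
    · next hle =>
      push_neg at hle
      exact (max_eq_right (by linarith : (0:ℝ) ≤ z - lam / (ε + x k))).symm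
  -- G decreases strictly on positives, and G 0 = 0
  have hfx : ∀ w : ℝ, 0 ≤ w → z - lam / (ε + w) < w := by
    intro w hw
    have hd : 0 < ε + w := by linarith
    rw [sub_lt_iff_lt_add, ← sub_lt_iff_lt_add', lt_div_iff₀ hd]
    nlinarith
  have hGle : ∀ w : ℝ, 0 ≤ w → G w ≤ w := by
    intro w hw
    exact max_le hw (hfx w hw).le
  have hGlt : ∀ w : ℝ, 0 < w → G w < w := by
    intro w hw
    exact max_lt hw (hfx w hw.le)
  -- monotonicity
  have hant : Antitone x := by
    apply antitone_nat_of_succ_le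
    intro n
    rw [hrec n]
    exact hGle (x n) (hpos n)
  have hbdd : BddBelow (Set.range x) := ⟨0, fun y ⟨k, hk⟩ => hk ▸ hpos k⟩
  set L : ℝ := ⨅ k, x k with hL
  have htend : Filter.Tendsto x Filter.atTop (nhds L) :=
    tendsto_atTop_ciInf hant hbdd
  have hL0 : 0 ≤ L := le_ciInf hpos
  -- continuity of G at L
  have hcont : ContinuousAt G L := by
    apply ContinuousAt.sup continuousAt_const
    apply ContinuousAt.sub continuousAt_const
    exact ContinuousAt.div continuousAt_const (by fun_prop)
      (by positivity : ε + L ≠ 0)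
  -- fixed point
  have htend1 : Filter.Tendsto (fun k => x (k + 1)) Filter.atTop (nhds L) :=
    htend.comp (tendsto_add_atTop_nat 1)
  have htend2 : Filter.Tendsto (fun k => x (k + 1)) Filter.atTop (nhds (G L)) := by
    have heq : (fun k => x (k + 1)) = G ∘ x := funext fun k => hrec k
    rw [heq]
    exact Filter.Tendsto.comp hcont htend
  have hfix : G L = L := tendsto_nhds_unique htend2 htend1
  have : L = 0 := by
    rcases hL0.lt_or_eq with hlt | heq
    · exact absurd hfix (ne_of_lt (hGlt L hlt))
    · exact heq.symm
  rwa [this] at htend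
end

section
/- Let ε > 0 and λ > 0 with √λ > ε. Let z ∈ [2√λ − ε, λ/ε), and let the sequence (x^{(k)})_{k≥0} be generated by the reweighted ℓ₁ iteration from an initial guess x^{(0)} ≥ 0. If x^{(0)} ∈ [0, r₁(z)), then the sequence (x^{(k)}) converges to 0; and if x^{(0)} = r₁(z), then the sequence is constantly equal to r₁(z), so it converges to r₁(z). Here r₁(z) = (z − ε)/2 − √((z + ε)²/4 − λ). -/
open Real Filter
set_option maxHeartbeats 1000000

/-- for `√λ > ε` and `z ∈ [2√λ − ε, λ/ε)`, initializations below
`r₁(z)` lead to 0 and initialization at `r₁(z)` stays at `r₁(z)`. -/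

theorem iterRW_conv_mid_z_below_r1 (ε lam z : ℝ) (hε : 0 < ε) (hlam : 0 < lam)
    (h : ε < Real.sqrt lam)
    (hz : z ∈ Set.Ico (2 * Real.sqrt lam - ε) (lam / ε))
    (x : ℕ → ℝ) (hx0 : 0 ≤ x 0) (hiter : IterRW lam ε z x) :
    (x 0 < r1 lam ε z → Filter.Tendsto x Filter.atTop (nhds 0)) ∧
    (x 0 = r1 lam ε z → (∀ k : ℕ, x k = r1 lam ε z) ∧
      Filter.Tendsto x Filter.atTop (nhds (r1 lam ε z))) := by
  obtain ⟨hz1, hz2⟩ := hz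
  have hsl : 0 < Real.sqrt lam := lt_trans hε h
  have hz0 : 0 < z := by linarith
  have hslam : (Real.sqrt lam) ^ 2 = lam := Real.sq_sqrt hlam.le
  have hzε : ε * z < lam := by
    have := (lt_div_iff₀ hε).mp hz2
    nlinarith
  have hD : 0 ≤ (z + ε) ^ 2 / 4 - lam := by nlinarith
  set s := Real.sqrt ((z + ε) ^ 2 / 4 - lam) with hs
  have hs0 : 0 ≤ s := Real.sqrt_nonneg _
  have hs2 : s ^ 2 = (z + ε) ^ 2 / 4 - lam := Real.sq_sqrt hD
  set a := r1 lam ε z with ha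
  set b := r2 lam ε z with hb
  have hab : a ≤ b := by
    simp only [ha, hb, r1, r2, ← hs]; linarith
  have hsum : a + b = z - ε := by simp only [ha, hb, r1, r2, ← hs]; ring
  have hprod : a * b = lam - ε * z := by
    simp only [ha, hb, r1, r2, ← hs]; nlinarith
  have hapos : 0 < a := by
    have hbpos : 0 < b := by nlinarith
    nlinarith
  -- the iteration map
  set F : ℝ → ℝ := fun t => max 0 (z - lam / (ε + t)) with hFdef
  have hstep : ∀ t : ℝ, 0 ≤ t →
      (if |z| ≤ lam / (ε + |t|) then 0 else Real.sign z * (|z| - lam / (ε + |t|))) = F t := by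
    intro t ht
    have h1 : |t| = t := abs_of_nonneg ht
    have h2 : |z| = z := abs_of_pos hz0
    have h3 : Real.sign z = 1 := Real.sign_of_pos hz0
    rw [h1, h2, h3]
    simp only [hFdef]
    split_ifs with hc
    · rw [eq_comm, max_eq_left]; linarith
    · rw [one_mul, eq_comm, max_eq_right]; linarith [not_le.mp hc]
  have hpos : ∀ k, 0 ≤ x k ∧ x (k + 1) = F (x k) := by
    intro k
    induction k with
    | zero => exact ⟨hx0, by rw [hiter 0, hstep _ hx0]⟩
    | succ n ih =>
      have h1 : 0 ≤ x (n + 1) := by rw [ih.2]; exact le_max_left _ _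
      exact ⟨h1, by rw [hiter (n + 1), hstep _ h1]⟩
  have hεt : ∀ t : ℝ, 0 ≤ t → 0 < ε + t := fun t ht => by linarith
  -- F a = a
  have hFa : F a = a := by
    have hεa := hεt a hapos.le
    have heq : z - lam / (ε + a) = a := by
      field_simp
      nlinarith
    simp only [hFdef, heq, max_eq_right hapos.le]
  -- F t ≤ t for 0 ≤ t ≤ a
  have hFle : ∀ t : ℝ, 0 ≤ t → t ≤ a → F t ≤ t := by
    intro t ht hta
    have hεt' := hεt t ht
    have hkey : 0 ≤ (a - t) * (b - t) := mul_nonneg (by linarith) (by linarith)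
    have h4 : (z - t) * (ε + t) ≤ lam := by nlinarith
    have h5 : z - t ≤ lam / (ε + t) := (le_div_iff₀ hεt').mpr h4
    have h6 : z - lam / (ε + t) ≤ t := by linarith
    simp only [hFdef]
    exact max_le ht h6
  constructor
  · -- x 0 < a : converges to 0
    intro hx0a
    have hinv : ∀ k, x k < a := by
      intro k
      induction k with
      | zero => exact hx0a
      | succ n ih =>
        calc x (n + 1) = F (x n) := (hpos n).2
          _ ≤ x n := hFle (x n) (hpos n).1 ih.le
          _ < a := ih
    have hanti : Antitone x := by
      apply antitone_nat_of_succ_le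
      intro n
      rw [(hpos n).2]
      exact hFle (x n) (hpos n).1 (hinv n).le
    have hbdd : BddBelow (Set.range x) := ⟨0, by rintro _ ⟨k, rfl⟩; exact (hpos k).1⟩
    have hL : Tendsto x atTop (nhds (⨅ k, x k)) := tendsto_atTop_ciInf hanti hbdd
    set L := ⨅ k, x k with hLdef
    have hL0 : 0 ≤ L := le_ciInf fun k => (hpos k).1
    have hLa : L < a := lt_of_le_of_lt (ciInf_le hbdd 0) hx0a
    have hεL : 0 < ε + L := by linarith
    have hc1 : ContinuousAt (fun t : ℝ => ε + t) L := by fun_prop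
    have hc2 : ContinuousAt (fun t : ℝ => lam / (ε + t)) L :=
      ContinuousAt.div continuousAt_const hc1 hεL.ne'
    have hc3 : ContinuousAt (fun t : ℝ => z - lam / (ε + t)) L :=
      ContinuousAt.sub continuousAt_const hc2
    have hcont : ContinuousAt F L := continuousAt_const.max hc3
    have h1 : Tendsto (fun k => x (k + 1)) atTop (nhds (F L)) := by
      have heq : (fun k => x (k + 1)) = fun k => F (x k) := funext fun k => (hpos k).2
      rw [heq]
      show Tendsto (F ∘ x) atTop (nhds (F L))
      exact Filter.Tendsto.comp hcont hL
    have h2 : Tendsto (fun k => x (k + 1)) atTop (nhds L) :=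
      hL.comp (tendsto_add_atTop_nat 1)
    have hFL : F L = L := tendsto_nhds_unique h1 h2
    have hL0' : L = 0 := by
      by_contra hne
      have hLpos : 0 < L := lt_of_le_of_ne hL0 (Ne.symm hne)
      have heq : z - lam / (ε + L) = L := by
        rcases le_or_gt (z - lam / (ε + L)) 0 with hc | hc
        · rw [hFdef] at hFL
          simp only [max_eq_left hc] at hFL
          exact absurd hFL.symm hne
        · rw [hFdef] at hFL
          simpa [max_eq_right hc.le] using hFL
      have hquad : L ^ 2 - (z - ε) * L + (lam - ε * z) = 0 := by
        field_simp at heq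
        nlinarith
      nlinarith [mul_pos (sub_pos.mpr hLa) (sub_pos.mpr (lt_of_lt_of_le hLa hab))]
    rw [hL0'] at hL
    exact hL
  · -- x 0 = a : stays at a
    intro hx0a
    have hall : ∀ k, x k = a := by
      intro k
      induction k with
      | zero => exact hx0a
      | succ n ih => rw [(hpos n).2, ih, hFa]
    refine ⟨hall, ?_⟩
    have heq : x = fun _ => a := funext hall
    rw [heq]
    exact tendsto_const_nhds
end

section
/- Let ε > 0 and λ > 0 with √λ > ε. Let z ∈ [2√λ − ε, λ/ε), and let the sequence (x^{(k)})_{k≥0} be generated by the reweighted ℓ₁ iteration from an initial guess x^{(0)} ∈ (r₁(z), ∞), where r₁(z) = (z − ε)/2 − √((z + ε)²/4 − λ). Then the sequence (x^{(k)}) converges to r₂(z) = (z − ε)/2 + √((z + ε)²/4 − λ). -/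
open Real Filter

set_option maxHeartbeats 1000000 in
/-- for `√λ > ε`, `z ∈ [2√λ − ε, λ/ε)`, and `x⁽⁰⁾ > r₁(z)`,
the reweighted ℓ₁ sequence converges to `r₂(z)`. -/
theorem iterRW_conv_mid_z_above_r1 (ε lam z : ℝ) (hε : 0 < ε) (hlam : 0 < lam)
    (h : ε < Real.sqrt lam)
    (hz : z ∈ Set.Ico (2 * Real.sqrt lam - ε) (lam / ε))
    (x : ℕ → ℝ) (hx0 : r1 lam ε z < x 0) (hiter : IterRW lam ε z x) :
    Filter.Tendsto x Filter.atTop (nhds (r2 lam ε z)) := by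
  obtain ⟨hz1, hz2⟩ := hz
  have hsl : 0 < Real.sqrt lam := lt_trans hε h
  have hsl2 : Real.sqrt lam ^ 2 = lam := Real.sq_sqrt hlam.le
  have hzε : ε < z := by nlinarith
  have hz0 : 0 < z := lt_trans hε hzε
  have hεz : ε * z < lam := by
    have := (lt_div_iff₀ hε).mp hz2; linarith
  have hD : (0:ℝ) ≤ (z + ε) ^ 2 / 4 - lam := by nlinarith
  obtain ⟨s, hs⟩ : ∃ s : ℝ, s = Real.sqrt ((z + ε) ^ 2 / 4 - lam) := ⟨_, rfl⟩
  have hs0 : 0 ≤ s := hs ▸ Real.sqrt_nonneg _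
  have hs2 : s ^ 2 = (z + ε) ^ 2 / 4 - lam := hs ▸ Real.sq_sqrt hD
  obtain ⟨A, hAdef⟩ : ∃ a : ℝ, a = (z - ε) / 2 - s := ⟨_, rfl⟩
  obtain ⟨B, hBdef⟩ : ∃ b : ℝ, b = (z - ε) / 2 + s := ⟨_, rfl⟩
  have hA : r1 lam ε z = A := by rw [r1, ← hs, hAdef]
  have hB : r2 lam ε z = B := by rw [r2, ← hs, hBdef]
  rw [hA] at hx0
  rw [hB]
  have hsum : A + B = z - ε := by rw [hAdef, hBdef]; ring
  have hprod : A * B = lam - ε * z := by rw [hAdef, hBdef]; nlinarith [hs2]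
  have hB0 : 0 < B := by rw [hBdef]; nlinarith
  have hA0 : 0 < A := by nlinarith
  have hAB : A ≤ B := by rw [hAdef, hBdef]; linarith
  have hkey : (ε + A) * (ε + B) = lam := by nlinarith [hsum, hprod]
  have hquad : ∀ t : ℝ, (z - t) * (ε + t) - lam = (t - A) * (B - t) := by
    intro t; linear_combination (-t) * hsum + hprod
  have hfixB : (z - B) * (ε + B) = lam := by
    linear_combination hquad B
  have hfixA : (z - A) * (ε + A) = lam := by
    linear_combination hquad A
  -- step lemma
  have hstep : ∀ k, A < x k → x (k + 1) = z - lam / (ε + x k) := by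
    intro k hk
    have hxk0 : 0 < x k := lt_trans hA0 hk
    have hden : 0 < ε + x k := by linarith
    have hcond : lam / (ε + x k) < z := by
      rw [div_lt_iff₀ hden]; nlinarith [hfixA]
    rw [hiter k, abs_of_pos hxk0, abs_of_pos hz0, if_neg (not_le.mpr hcond),
      Real.sign_of_pos hz0, one_mul]
  -- invariant
  have hinv : ∀ k, A < x k := by
    intro k
    induction k with
    | zero => exact hx0
    | succ n ih =>
      rw [hstep n ih]
      have hden : 0 < ε + x n := by linarith [lt_trans hA0 ih]
      have : lam / (ε + x n) < z - A := by
        rw [div_lt_iff₀ hden]; nlinarith [hfixA]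
      linarith
  -- recursion formula for difference
  have hd : ∀ k, x (k + 1) - B = (x k - B) * (lam / ((ε + x k) * (ε + B))) := by
    intro k
    have hden : 0 < ε + x k := by linarith [lt_trans hA0 (hinv k)]
    have hdenB : 0 < ε + B := by linarith
    rw [hstep k (hinv k)]
    field_simp
    linear_combination (ε + x k) * hfixB
  have hmul : ∀ k, (x (k+1) - B) * ((ε + x k) * (ε + B)) = (x k - B) * lam := by
    intro k
    have hden : 0 < ε + x k := by linarith [lt_trans hA0 (hinv k)]
    have hdenB : 0 < ε + B := by linarith
    rw [hd k]; field_simp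
  have hdenB : 0 < ε + B := by linarith
  rcases le_or_gt (x 0) B with hle | hgt
  · -- Case 1 : x 0 ≤ B, increasing, contraction
    have hub : ∀ k, x k ≤ B := by
      intro k
      induction k with
      | zero => exact hle
      | succ n ih =>
        rw [hstep n (hinv n)]
        have hden : 0 < ε + x n := by linarith [lt_trans hA0 (hinv n)]
        have h1 : lam / (ε + B) ≤ lam / (ε + x n) :=
          div_le_div_of_nonneg_left hlam.le hden (by linarith)
        have h2 : z - B = lam / (ε + B) := by
          field_simp; linarith [hfixB]
        linarith
    have hmono : ∀ k, x k ≤ x (k + 1) := by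
      intro k
      rw [hstep k (hinv k)]
      have hden : 0 < ε + x k := by linarith [lt_trans hA0 (hinv k)]
      have h1 : lam / (ε + x k) ≤ z - x k := by
        rw [div_le_iff₀ hden]
        nlinarith [hquad (x k), hinv k, hub k]
      linarith
    have hlb : ∀ k, x 0 ≤ x k := by
      intro k
      induction k with
      | zero => exact le_refl _
      | succ n ih => exact le_trans ih (hmono n)
    set ρ := lam / ((ε + x 0) * (ε + B)) with hρ
    have hden0 : 0 < ε + x 0 := by linarith [lt_trans hA0 (hinv 0)]
    have hρ0 : 0 ≤ ρ := by positivity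
    have hρ1 : ρ < 1 := by
      rw [hρ, div_lt_one (by positivity)]
      nlinarith [hkey, hinv 0]
    have habs : ∀ k, |x k - B| ≤ |x 0 - B| * ρ ^ k := by
      intro k
      induction k with
      | zero => simp
      | succ n ih =>
        have hden : 0 < ε + x n := by linarith [lt_trans hA0 (hinv n)]
        have hrn : lam / ((ε + x n) * (ε + B)) ≤ ρ := by
          rw [hρ]
          apply div_le_div_of_nonneg_left hlam.le (by positivity)
          have := hlb n
          nlinarith
        have hrn0 : 0 ≤ lam / ((ε + x n) * (ε + B)) := by positivity
        calc |x (n+1) - B| = |x n - B| * (lam / ((ε + x n) * (ε + B))) := by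
              rw [hd n, abs_mul, abs_of_nonneg hrn0]
          _ ≤ (|x 0 - B| * ρ ^ n) * ρ := by
              apply mul_le_mul ih hrn hrn0
              positivity
          _ = |x 0 - B| * ρ ^ (n + 1) := by ring
    have hg : Tendsto (fun k : ℕ => |x 0 - B| * ρ ^ k) atTop (nhds 0) := by
      simpa using (tendsto_pow_atTop_nhds_zero_of_lt_one hρ0 hρ1).const_mul |x 0 - B|
    have : Tendsto (fun k => x k - B) atTop (nhds 0) :=
      squeeze_zero_norm (fun k => by simpa [Real.norm_eq_abs] using habs k) hg
    exact tendsto_sub_nhds_zero_iff.mp this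
  · -- Case 2 : x 0 > B, decreasing to B
    have hlb2 : ∀ k, B < x k := by
      intro k
      induction k with
      | zero => exact hgt
      | succ n ih =>
        have hden : 0 < ε + x n := by linarith [lt_trans hA0 (hinv n)]
        have hpos : 0 < (x n - B) * (lam / ((ε + x n) * (ε + B))) := by
          apply mul_pos (by linarith); positivity
        have := hd n
        linarith
    set L := Real.sqrt lam with hL
    have hc : L ≤ ε + B := by
      have h1 : lam ≤ (ε + B) ^ 2 := by
        rw [hBdef]
        nlinarith [hs2, mul_nonneg hs0 (by linarith : (0:ℝ) ≤ z + ε)]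
      calc L = Real.sqrt lam := rfl
        _ ≤ Real.sqrt ((ε + B)^2) := Real.sqrt_le_sqrt h1
        _ = ε + B := Real.sqrt_sq (by linarith)
    have hL2 : L ^ 2 = lam := Real.sq_sqrt hlam.le
    have key' : ∀ k, (x (k+1) - B) * (L + (x k - B)) ≤ (x k - B) * L := by
      intro k
      have hden : 0 < ε + x k := by linarith [lt_trans hA0 (hinv k)]
      have hdk : 0 < x k - B := by linarith [hlb2 k]
      have hdk1 : 0 < x (k+1) - B := by linarith [hlb2 (k+1)]
      have hW : (L + (x k - B)) * L ≤ (ε + x k) * (ε + B) := by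
        nlinarith [hc, hdk, hsl]
      have h3 : ((x (k+1) - B) * (L + (x k - B))) * L ≤ ((x k - B) * L) * L := by
        calc ((x (k+1) - B) * (L + (x k - B))) * L
            = (x (k+1) - B) * ((L + (x k - B)) * L) := by ring
          _ ≤ (x (k+1) - B) * ((ε + x k) * (ε + B)) :=
              mul_le_mul_of_nonneg_left hW hdk1.le
          _ = (x k - B) * lam := hmul k
          _ = ((x k - B) * L) * L := by rw [← hL2]; ring
      exact le_of_mul_le_mul_right h3 hsl
    have hbd : ∀ k : ℕ, x (k+1) - B ≤ L / (k + 1) := by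
      intro k
      induction k with
      | zero =>
        have h0 := key' 0
        have hdk : 0 < x 0 - B := by linarith
        have hdk1 : 0 < x 1 - B := by linarith [hlb2 1]
        simp only [Nat.cast_zero, zero_add, div_one]
        nlinarith [h0, hdk, hdk1, hsl]
      | succ n ih =>
        have h0 := key' (n+1)
        have hdk : 0 < x (n+1) - B := by linarith [hlb2 (n+1)]
        have hdk1 : 0 < x (n+2) - B := by linarith [hlb2 (n+2)]
        have hN : (0:ℝ) < (n:ℝ) + 1 := by positivity
        have ih' : (x (n+1) - B) * ((n:ℝ) + 1) ≤ L := by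
          rw [div_eq_mul_inv] at ih
          calc (x (n+1) - B) * ((n:ℝ) + 1) ≤ (L * ((n:ℝ)+1)⁻¹) * ((n:ℝ)+1) :=
                mul_le_mul_of_nonneg_right ih hN.le
            _ = L := by field_simp
        have hLu : 0 < L + (x (n+1) - B) := by linarith
        rw [show ((n+1:ℕ):ℝ) + 1 = (n:ℝ) + 2 by push_cast; ring]
        rw [le_div_iff₀ (by positivity : (0:ℝ) < (n:ℝ) + 2)]
        nlinarith [h0, ih', hLu, hsl, hdk, hdk1]
    have hg : Tendsto (fun k : ℕ => L / ((k:ℝ) + 1)) atTop (nhds 0) := by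
      apply Tendsto.div_atTop tendsto_const_nhds
      exact tendsto_atTop_add_const_right atTop 1 tendsto_natCast_atTop_atTop
    have h0 : Tendsto (fun k => x (k + 1) - B) atTop (nhds 0) := by
      apply squeeze_zero_norm _ hg
      intro k
      rw [Real.norm_eq_abs, abs_of_pos (by linarith [hlb2 (k+1)] : 0 < x (k+1) - B)]
      exact hbd k
    have h1 : Tendsto (fun k => x (k + 1)) atTop (nhds B) :=
      tendsto_sub_nhds_zero_iff.mp h0
    exact (tendsto_add_atTop_iff_nat 1).mp h1
end

section
/- Let ε > 0 and λ > 0 with √λ ≤ ε. Then for every z ≥ 0 and every initial guess x^{(0)} ≥ 0, the sequence (x^{(k)})_{k≥0} generated by the reweighted ℓ₁ iteration converges, and its limit is the unique element of prox_{λg}(z); that is, the limit is 0 if z ≤ λ/ε and is r₂(z) = (z − ε)/2 + √((z + ε)²/4 − λ) if z > λ/ε. -/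
open Real Filter

/-- The smooth branch of the objective on the nonnegative half-line. -/
noncomputable def Qs (lam ε z x : ℝ) : ℝ :=
  1 / (2 * lam) * (x - z) ^ 2 + Real.log (1 + x / ε)

lemma qfun_eq_Qs (lam ε z x : ℝ) (hx : 0 ≤ x) : qfun lam ε z x = Qs lam ε z x := by
  unfold qfun Qs logpen
  rw [abs_of_nonneg hx]

lemma qfun_abs_le (lam ε z : ℝ) (hlam : 0 < lam) (hz : 0 ≤ z) (x : ℝ) :
    qfun lam ε z |x| ≤ qfun lam ε z x := by
  unfold qfun logpen
  rw [abs_abs]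
  have h2 : (|x| - z) ^ 2 ≤ (x - z) ^ 2 := by
    rcases abs_cases x with ⟨h1, _⟩ | ⟨h1, h2⟩ <;> rw [h1] <;> nlinarith
  have : (0:ℝ) < 2 * lam := by linarith
  have := div_le_div_of_nonneg_left (by positivity : (0:ℝ) ≤ 1) this le_rfl
  nlinarith [mul_le_mul_of_nonneg_left h2 (le_of_lt (by positivity : (0:ℝ) < 1 / (2 * lam)))]

lemma qfun_abs_lt (lam ε z : ℝ) (hlam : 0 < lam) (hz : 0 < z) (x : ℝ) (hx : x < 0) :
    qfun lam ε z |x| < qfun lam ε z x := by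
  unfold qfun logpen
  rw [abs_abs]
  have h1 : |x| = -x := abs_of_neg hx
  rw [h1]
  have h2 : (-x - z) ^ 2 < (x - z) ^ 2 := by nlinarith
  have hpos : (0:ℝ) < 1 / (2 * lam) := by positivity
  nlinarith [mul_lt_mul_of_pos_left h2 hpos]

lemma Qs_hasDerivAt (lam ε z : ℝ) (hε : 0 < ε) (hlam : 0 < lam) (x : ℝ) (hx : -ε < x) :
    HasDerivAt (Qs lam ε z) ((x - z) / lam + 1 / (ε + x)) x := by
  have hne : 1 + x / ε ≠ 0 := by
    have hεx : 0 < ε + x := by linarith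
    have : 0 < 1 + x / ε := by
      rw [show (1:ℝ) + x / ε = (ε + x) / ε by field_simp]
      positivity
    linarith
  have h1 : HasDerivAt (fun t : ℝ => 1 + t / ε) (1 / ε) x := by
    simpa using ((hasDerivAt_id x).div_const ε).const_add 1
  have h2 : HasDerivAt (fun t : ℝ => Real.log (1 + t / ε)) ((1 + x / ε)⁻¹ * (1 / ε)) x :=
    by have := (Real.hasDerivAt_log hne).comp x h1; exact this
  have h3 : HasDerivAt (fun t : ℝ => 1 / (2 * lam) * (t - z) ^ 2)
      (1 / (2 * lam) * (2 * (x - z))) x := by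
    have := (((hasDerivAt_id x).sub_const z).pow 2).const_mul (1 / (2 * lam))
    simpa using this
  have h4 := h3.add h2
  have heq : 1 / (2 * lam) * (2 * (x - z)) + (1 + x / ε)⁻¹ * (1 / ε)
      = (x - z) / lam + 1 / (ε + x) := by
    have hεx : ε + x ≠ 0 := by linarith
    rw [show (1:ℝ) + x / ε = (ε + x) / ε by field_simp]
    field_simp
    try ring
  rw [heq] at h4
  exact h4

lemma Qs_deriv_eq (lam ε z : ℝ) (hε : 0 < ε) (hlam : 0 < lam) (x : ℝ) (hx : -ε < x) :
    deriv (Qs lam ε z) x = ((x - z) * (ε + x) + lam) / (lam * (ε + x)) := by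
  rw [(Qs_hasDerivAt lam ε z hε hlam x hx).deriv]
  have hεx : ε + x ≠ 0 := by linarith
  field_simp
  try ring

lemma Qs_contOn (lam ε z : ℝ) (hε : 0 < ε) (hlam : 0 < lam) {s : Set ℝ} (hs : s ⊆ Set.Ici 0) :
    ContinuousOn (Qs lam ε z) s := fun x hx =>
  ((Qs_hasDerivAt lam ε z hε hlam x (by have := hs hx; simp at this; linarith)).continuousAt).continuousWithinAt

/-- for `√λ ≤ ε`, the reweighted ℓ₁ iteration always converges to
the unique element of `prox_{λg}(z)`. -/
theorem iterRW_accurate_sqrt_le (ε lam : ℝ) (hε : 0 < ε) (hlam : 0 < lam)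
    (h : Real.sqrt lam ≤ ε) (z : ℝ) (hz : 0 ≤ z)
    (x : ℕ → ℝ) (hx0 : 0 ≤ x 0) (hiter : IterRW lam ε z x) :
    (z ≤ lam / ε →
      Filter.Tendsto x Filter.atTop (nhds 0) ∧ prox lam ε z = {0}) ∧
    (lam / ε < z →
      Filter.Tendsto x Filter.atTop (nhds (r2 lam ε z)) ∧
      prox lam ε z = {r2 lam ε z}) := by
  have hle2 : lam ≤ ε ^ 2 := by
    have := Real.sqrt_le_sqrt (le_of_lt hlam)
    nlinarith [Real.sq_sqrt hlam.le, Real.sqrt_nonneg lam, h]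
  -- the iteration map
  have step : ∀ t : ℝ, 0 ≤ t →
      (if |z| ≤ lam / (ε + |t|) then 0 else Real.sign z * (|z| - lam / (ε + |t|)))
        = max 0 (z - lam / (ε + t)) := by
    intro t ht
    rw [abs_of_nonneg ht, abs_of_nonneg hz]
    have hεt : 0 < ε + t := by linarith
    split_ifs with hc
    · symm; rw [max_eq_left]; linarith
    · push_neg at hc
      have hz0 : 0 < z := lt_trans (by positivity) hc
      rw [Real.sign_of_pos hz0, one_mul]
      symm; rw [max_eq_right]; linarith
  have key : ∀ k : ℕ, 0 ≤ x k ∧ x (k + 1) = max 0 (z - lam / (ε + x k)) := by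
    intro k
    induction k with
    | zero => exact ⟨hx0, by rw [hiter 0, step _ hx0]⟩
    | succ n ih =>
      have h1 : 0 ≤ x (n + 1) := ih.2 ▸ le_max_left _ _
      exact ⟨h1, by rw [hiter (n + 1), step _ h1]⟩
  have Tmono : ∀ a b : ℝ, 0 ≤ a → a ≤ b →
      max 0 (z - lam / (ε + a)) ≤ max 0 (z - lam / (ε + b)) := by
    intro a b ha hab
    apply max_le_max le_rfl
    have h1 : lam / (ε + b) ≤ lam / (ε + a) :=
      div_le_div_of_nonneg_left hlam.le (by linarith) (by linarith)
    linarith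
  -- convergence to a fixed point
  obtain ⟨L, hL0, hLfix, hL⟩ :
      ∃ L : ℝ, 0 ≤ L ∧ L = max 0 (z - lam / (ε + L)) ∧ Tendsto x atTop (nhds L) := by
    have fixed : ∀ L : ℝ, 0 ≤ L → Tendsto x atTop (nhds L) →
        L = max 0 (z - lam / (ε + L)) := by
      intro L hL0 hL
      have hne : ε + L ≠ 0 := by linarith
      have hcont : ContinuousAt (fun t : ℝ => max 0 (z - lam / (ε + t))) L :=
        continuousAt_const.max
          (continuousAt_const.sub ((continuousAt_const.div
            (continuousAt_const.add continuousAt_id) hne)))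
      have h1 : Tendsto (fun k => x (k + 1)) atTop (nhds L) :=
        hL.comp (tendsto_add_atTop_nat 1)
      have h2 : (fun k => x (k + 1)) = fun k => max 0 (z - lam / (ε + x k)) :=
        funext fun k => (key k).2
      rw [h2] at h1
      have h3 : Tendsto (fun k => max 0 (z - lam / (ε + x k))) atTop
          (nhds (max 0 (z - lam / (ε + L)))) := hcont.tendsto.comp hL
      exact (tendsto_nhds_unique h1 h3)
    rcases le_total (x 1) (x 0) with hcase | hcase
    · have hanti : ∀ k, x (k + 1) ≤ x k := by
        intro k
        induction k with
        | zero => exact hcase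
        | succ n ih =>
          calc x (n + 1 + 1) = max 0 (z - lam / (ε + x (n + 1))) := (key (n + 1)).2
            _ ≤ max 0 (z - lam / (ε + x n)) := Tmono _ _ (key (n + 1)).1 ih
            _ = x (n + 1) := ((key n).2).symm
      have hA : Antitone x := antitone_nat_of_succ_le hanti
      have hbdd : BddBelow (Set.range x) := ⟨0, by rintro _ ⟨k, rfl⟩; exact (key k).1⟩
      have hL := tendsto_atTop_ciInf hA hbdd
      refine ⟨_, le_ciInf fun k => (key k).1, fixed _ (le_ciInf fun k => (key k).1) hL, hL⟩
    · have hmono : ∀ k, x k ≤ x (k + 1) := by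
        intro k
        induction k with
        | zero => exact hcase
        | succ n ih =>
          calc x (n + 1) = max 0 (z - lam / (ε + x n)) := (key n).2
            _ ≤ max 0 (z - lam / (ε + x (n + 1))) := Tmono _ _ (key n).1 ih
            _ = x (n + 1 + 1) := ((key (n + 1)).2).symm
      have hM : Monotone x := monotone_nat_of_le_succ hmono
      have hub : ∀ k, x k ≤ max (x 0) z := by
        intro k
        cases k with
        | zero => exact le_max_left _ _
        | succ n =>
          rw [(key n).2]
          have hεt : 0 < ε + x n := by have := (key n).1; linarith
          have : z - lam / (ε + x n) ≤ z := by
            have : 0 < lam / (ε + x n) := by positivity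
            linarith
          refine le_trans (max_le hz (by linarith)) (le_max_right _ _)
      have hbdd : BddAbove (Set.range x) := ⟨max (x 0) z, by rintro _ ⟨k, rfl⟩; exact hub k⟩
      have hL := tendsto_atTop_ciSup hM hbdd
      have hL0 : 0 ≤ ⨆ k, x k := le_trans (key 0).1 (le_ciSup hbdd 0)
      exact ⟨_, hL0, fixed _ hL0 hL, hL⟩
  have hεL : 0 < ε + L := by linarith
  -- if L > 0 then it solves the quadratic
  have hfixpos : 0 < L → lam = (z - L) * (ε + L) := by
    intro hLpos
    have hw : z - lam / (ε + L) = L := by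
      rcases le_or_gt (z - lam / (ε + L)) 0 with hc | hc
      · rw [max_eq_left hc] at hLfix; linarith
      · rw [max_eq_right hc.le] at hLfix; linarith
    have : lam / (ε + L) = z - L := by linarith
    field_simp at this
    linarith
  constructor
  · -- case z ≤ lam / ε
    intro hcase
    have hzε : z * ε ≤ lam := by
      rw [le_div_iff₀ hε] at hcase; linarith
    have hzle : z ≤ ε := by nlinarith
    have hLz : L = 0 := by
      by_contra hne
      have hLpos : 0 < L := lt_of_le_of_ne hL0 (Ne.symm hne)
      have := hfixpos hLpos
      nlinarith
    constructor
    · rw [hLz] at hL; exact hL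
    · -- prox = {0}
      have hsm : StrictMonoOn (Qs lam ε z) (Set.Ici 0) := by
        apply strictMonoOn_of_deriv_pos (convex_Ici 0) (Qs_contOn lam ε z hε hlam le_rfl.subset)
        intro t ht
        rw [interior_Ici] at ht
        have ht0 : 0 < t := ht
        rw [Qs_deriv_eq lam ε z hε hlam t (by linarith)]
        apply div_pos _ (by positivity)
        nlinarith
      have hmem : (0:ℝ) ∈ prox lam ε z := by
        intro y
        have h1 := qfun_abs_le lam ε z hlam hz y
        have h2 : Qs lam ε z 0 ≤ Qs lam ε z |y| :=
          hsm.monotoneOn (Set.mem_Ici.mpr le_rfl) (Set.mem_Ici.mpr (abs_nonneg y)) (abs_nonneg y)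
        calc qfun lam ε z 0 = Qs lam ε z 0 := qfun_eq_Qs _ _ _ _ le_rfl
          _ ≤ Qs lam ε z |y| := h2
          _ = qfun lam ε z |y| := (qfun_eq_Qs _ _ _ _ (abs_nonneg y)).symm
          _ ≤ qfun lam ε z y := h1
      rw [Set.eq_singleton_iff_unique_mem]
      refine ⟨hmem, fun w hw => ?_⟩
      by_contra hne
      have hwa : 0 < |w| := abs_pos.mpr hne
      have h2 : Qs lam ε z 0 < Qs lam ε z |w| :=
        hsm (Set.mem_Ici.mpr le_rfl) (Set.mem_Ici.mpr (abs_nonneg w)) hwa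
      have h3 : qfun lam ε z 0 < qfun lam ε z w := by
        calc qfun lam ε z 0 = Qs lam ε z 0 := qfun_eq_Qs _ _ _ _ le_rfl
          _ < Qs lam ε z |w| := h2
          _ = qfun lam ε z |w| := (qfun_eq_Qs _ _ _ _ (abs_nonneg w)).symm
          _ ≤ qfun lam ε z w := qfun_abs_le lam ε z hlam hz w
      exact absurd (hw 0) (not_le.mpr h3)
  · -- case lam / ε < z
    intro hcase
    have hzε : lam < z * ε := by
      rw [div_lt_iff₀ hε] at hcase; linarith
    have hz0 : 0 < z := lt_trans (by positivity) hcase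
    set s := Real.sqrt ((z + ε) ^ 2 / 4 - lam) with hs_def
    have hsarg : 0 ≤ (z + ε) ^ 2 / 4 - lam := by nlinarith [sq_nonneg (z - ε)]
    have hs2 : s ^ 2 = (z + ε) ^ 2 / 4 - lam := Real.sq_sqrt hsarg
    have hs0 : 0 ≤ s := Real.sqrt_nonneg _
    have hr2_def : r2 lam ε z = (z - ε) / 2 + s := rfl
    have hr2pos : 0 < r2 lam ε z := by
      rw [hr2_def]
      nlinarith [sq_nonneg (s + (z - ε) / 2), sq_nonneg (s - (z - ε) / 2)]
    have hφr2 : (r2 lam ε z) ^ 2 + (ε - z) * r2 lam ε z + (lam - z * ε) = 0 := by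
      rw [hr2_def]; nlinarith [hs2]
    have hB : 0 < r2 lam ε z + ε - z := by
      by_contra hc
      push_neg at hc
      nlinarith [mul_nonneg hr2pos.le (by linarith : 0 ≤ -(r2 lam ε z + ε - z))]
    -- limit is r2
    have hLr2 : L = r2 lam ε z := by
      have hLpos : 0 < L := by
        rcases eq_or_lt_of_le hL0 with hL0' | hL0'
        · exfalso
          rw [← hL0'] at hLfix
          have h1 : 0 < z - lam / (ε + 0) := by
            rw [add_zero]
            have : lam / ε < z := hcase
            linarith
          have := le_max_right (0:ℝ) (z - lam / (ε + 0))
          rw [← hLfix] at this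
          linarith
        · exact hL0'
      have hq := hfixpos hLpos
      have hfac : (L - r2 lam ε z) * (L + r2 lam ε z + ε - z) = 0 := by
        linear_combination hq - hφr2
      rcases mul_eq_zero.mp hfac with h1 | h1
      · linarith
      · exfalso; linarith
    have hsm : StrictMonoOn (Qs lam ε z) (Set.Ici (r2 lam ε z)) := by
      apply strictMonoOn_of_deriv_pos (convex_Ici _)
        (Qs_contOn lam ε z hε hlam (fun t ht => le_trans hr2pos.le ht))
      intro t ht
      rw [interior_Ici] at ht
      have ht0 : r2 lam ε z < t := ht
      rw [Qs_deriv_eq lam ε z hε hlam t (by linarith)]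
      apply div_pos _ (mul_pos hlam (by linarith))
      have hid : (t - z) * (ε + t) + lam
          = (t - r2 lam ε z) * (t + r2 lam ε z + ε - z) := by linear_combination hφr2
      rw [hid]
      exact mul_pos (by linarith) (by linarith)
    have hsa : StrictAntiOn (Qs lam ε z) (Set.Icc 0 (r2 lam ε z)) := by
      apply strictAntiOn_of_deriv_neg (convex_Icc _ _)
        (Qs_contOn lam ε z hε hlam (fun t ht => ht.1))
      intro t ht
      rw [interior_Icc] at ht
      rw [Qs_deriv_eq lam ε z hε hlam t (by linarith [ht.1])]
      apply div_neg_of_neg_of_pos _ (mul_pos hlam (by linarith [ht.1]))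
      have hid : (t - z) * (ε + t) + lam
          = (t - r2 lam ε z) * (t + r2 lam ε z + ε - z) := by linear_combination hφr2
      rw [hid]
      apply mul_neg_of_neg_of_pos
      · linarith [ht.2]
      · linarith [ht.1]
    have hQmin : ∀ t : ℝ, 0 ≤ t → Qs lam ε z (r2 lam ε z) ≤ Qs lam ε z t := by
      intro t ht
      rcases le_total t (r2 lam ε z) with hc | hc
      · exact hsa.antitoneOn (Set.mem_Icc.mpr ⟨ht, hc⟩)
          (Set.mem_Icc.mpr ⟨hr2pos.le, le_rfl⟩) hc
      · exact hsm.monotoneOn (Set.mem_Ici.mpr le_rfl) (Set.mem_Ici.mpr hc) hc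
    have hQmin' : ∀ t : ℝ, 0 ≤ t → t ≠ r2 lam ε z →
        Qs lam ε z (r2 lam ε z) < Qs lam ε z t := by
      intro t ht htne
      rcases lt_or_gt_of_ne htne with hc | hc
      · exact hsa (Set.mem_Icc.mpr ⟨ht, hc.le⟩)
          (Set.mem_Icc.mpr ⟨hr2pos.le, le_rfl⟩) hc
      · exact hsm (Set.mem_Ici.mpr le_rfl) (Set.mem_Ici.mpr hc.le) hc
    constructor
    · rw [hLr2] at hL; exact hL
    · rw [Set.eq_singleton_iff_unique_mem]
      constructor
      · intro y
        calc qfun lam ε z (r2 lam ε z) = Qs lam ε z (r2 lam ε z) :=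
              qfun_eq_Qs _ _ _ _ hr2pos.le
          _ ≤ Qs lam ε z |y| := hQmin _ (abs_nonneg y)
          _ = qfun lam ε z |y| := (qfun_eq_Qs _ _ _ _ (abs_nonneg y)).symm
          _ ≤ qfun lam ε z y := qfun_abs_le lam ε z hlam hz y
      · intro w hw
        by_contra hne
        have h3 : qfun lam ε z (r2 lam ε z) < qfun lam ε z w := by
          rcases lt_or_ge w 0 with hwneg | hwpos
          · calc qfun lam ε z (r2 lam ε z) = Qs lam ε z (r2 lam ε z) :=
                  qfun_eq_Qs _ _ _ _ hr2pos.le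
              _ ≤ Qs lam ε z |w| := hQmin _ (abs_nonneg w)
              _ = qfun lam ε z |w| := (qfun_eq_Qs _ _ _ _ (abs_nonneg w)).symm
              _ < qfun lam ε z w := qfun_abs_lt lam ε z hlam hz0 w hwneg
          · calc qfun lam ε z (r2 lam ε z) = Qs lam ε z (r2 lam ε z) :=
                  qfun_eq_Qs _ _ _ _ hr2pos.le
              _ < Qs lam ε z w := hQmin' w hwpos hne
              _ = qfun lam ε z w := (qfun_eq_Qs _ _ _ _ hwpos).symm
        exact absurd (hw (r2 lam ε z)) (not_le.mpr h3)
end
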